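/- arXiv:1507.04917 — 6 statements merged into one kernel-verified Lean document; each statement's English description precedes it below -/
import Mathlib

section
/- Let s and d be positive integers and let p be an odd prime such that p ≥ d+2 and p−1 divides none of ds and of ks+1 for k = 1,…,d. If the weight ds is even, then H_{p−1}({s}^d) ≡ 0 (mod p); if ds is odd, then H_{p−1}({s}^d) ≡ 0 (mod p²). Here {s}^d denotes the composition (s,s,…,s) with s repeated d times. -/
open scoped BigOperators

/-- Alternating multiple harmonic sum `H_n(𝐬)` where `𝐬` is a list of pairs
`(sⱼ, εⱼ)` (exponent, sign):
`H_n(𝐬) = Σ_{n ≥ k₁ > ⋯ > k_d ≥ 1} Π εⱼ^{kⱼ} / kⱼ^{sⱼ}`. -/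
def AMHS : ℕ → List (ℕ × ℚ) → ℚ
  | _, [] => 1
  | n, (s, ε) :: t => ∑ k ∈ Finset.Icc 1 n, ε ^ k / (k : ℚ) ^ s * AMHS (k - 1) t

/-- Alternating multiple harmonic star sum `H⋆_n(𝐬)` (indices weakly decreasing). -/
def AMHSstar : ℕ → List (ℕ × ℚ) → ℚ
  | _, [] => 1
  | n, (s, ε) :: t => ∑ k ∈ Finset.Icc 1 n, ε ^ k / (k : ℚ) ^ s * AMHSstar k t

/-- A list of pairs is a signed composition: positive exponents, signs `±1`. -/
def IsSignedComp (l : List (ℕ × ℚ)) : Prop := ∀ x ∈ l, 0 < x.1 ∧ (x.2 = 1 ∨ x.2 = -1)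

/-- `a ≡ b (mod p^ℓ)` for rationals: the `p`-adic valuation of `a - b` is at least `ℓ`. -/
def RatModEq (p ℓ : ℕ) (a b : ℚ) : Prop := a = b ∨ (ℓ : ℤ) ≤ padicValRat p (a - b)

/-- View a composition of positive integers as a signed composition with all signs `+1`. -/
def posComp (l : List ℕ) : List (ℕ × ℚ) := l.map (fun s => (s, 1))


section Aux
lemma icc_succ (n : ℕ) : Finset.Icc 1 (n+1) = insert (n+1) (Finset.Icc 1 n) := by
  ext k; simp [Finset.mem_Icc]; omega

lemma amhs_repl (s : ℕ) : ∀ n d : ℕ, AMHS n (List.replicate d (s,1)) =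
    ∑ A ∈ (Finset.Icc 1 n).powersetCard d, ∏ k ∈ A, ((k:ℚ)^s)⁻¹ := by
  intro n
  induction n with
  | zero =>
      intro d
      cases d with
      | zero => simp [AMHS]
      | succ d =>
          have h0 : (Finset.Icc 1 0).powersetCard (d+1) = ∅ :=
            Finset.powersetCard_eq_empty.2 (by simp)
          rw [h0]
          simp [List.replicate_succ, AMHS]
  | succ n ih =>
      intro d
      cases d with
      | zero => simp [AMHS]
      | succ d =>
          have hrec : AMHS (n+1) (List.replicate (d+1) (s,1))
              = AMHS n (List.replicate (d+1) (s,1))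
                + (((n+1:ℕ):ℚ)^s)⁻¹ * AMHS n (List.replicate d (s,1)) := by
            rw [List.replicate_succ, AMHS, AMHS, Finset.sum_Icc_succ_top (by omega)]
            simp [List.replicate_succ]
          rw [hrec, ih, ih, icc_succ,
            Finset.powersetCard_succ_insert (by simp [Finset.mem_Icc])]
          rw [Finset.sum_union]
          · congr 1
            rw [Finset.sum_image]
            · rw [Finset.mul_sum]
              refine Finset.sum_congr rfl ?_
              intro A hA
              have hnA : (n+1) ∉ A := by
                intro hmem
                have := (Finset.mem_powersetCard.1 hA).1 hmem
                simp [Finset.mem_Icc] at this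
              rw [Finset.prod_insert hnA]
            · intro A hA B hB hAB
              have hnA : (n+1) ∉ A := by
                intro hmem
                have := (Finset.mem_powersetCard.1 hA).1 hmem
                simp [Finset.mem_Icc] at this
              have hnB : (n+1) ∉ B := by
                intro hmem
                have := (Finset.mem_powersetCard.1 hB).1 hmem
                simp [Finset.mem_Icc] at this
              ext a
              constructor
              · intro ha
                have : a ∈ insert (n+1) B := by rw [← hAB]; exact Finset.mem_insert_of_mem ha
                rcases Finset.mem_insert.1 this with h | h
                · exact absurd (h ▸ ha) hnA
                · exact h
              · intro ha
                have : a ∈ insert (n+1) A := by rw [hAB]; exact Finset.mem_insert_of_mem ha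
                rcases Finset.mem_insert.1 this with h | h
                · exact absurd (h ▸ ha) hnB
                · exact h
          · rw [Finset.disjoint_right]
            intro A hA hA'
            rcases Finset.mem_image.1 hA with ⟨B, hB, rfl⟩
            have := (Finset.mem_powersetCard.1 hA').1 (Finset.mem_insert_self _ _)
            simp [Finset.mem_Icc] at this



lemma sum_powersetCard_bij {α β M : Type*} [DecidableEq α] [DecidableEq β] [AddCommMonoid M]
    (P : Finset α) (Q : Finset β) (f : α → β)
    (hmap : ∀ a ∈ P, f a ∈ Q) (hinj : Set.InjOn f P)
    (hsurj : ∀ b ∈ Q, ∃ a ∈ P, f a = b)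
    (e : ℕ) (F : Finset α → M) (G : Finset β → M)
    (hFG : ∀ A ∈ P.powersetCard e, G (A.image f) = F A) :
    ∑ A ∈ P.powersetCard e, F A = ∑ B ∈ Q.powersetCard e, G B := by
  refine Finset.sum_nbij (fun A => A.image f) ?_ ?_ ?_ ?_
  · intro A hA
    rw [Finset.mem_powersetCard] at hA ⊢
    refine ⟨fun b hb => ?_, ?_⟩
    · rcases Finset.mem_image.1 hb with ⟨a, ha, rfl⟩
      exact hmap a (hA.1 ha)
    · rw [Finset.card_image_of_injOn (hinj.mono (by exact_mod_cast hA.1))]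
      exact hA.2
  · intro A hA A' hA' hE
    replace hE : A.image f = A'.image f := hE
    simp only [Finset.mem_coe, Finset.mem_powersetCard] at hA hA'
    ext a
    constructor
    · intro ha
      have : f a ∈ A'.image f := by rw [← hE]; exact Finset.mem_image_of_mem f ha
      rcases Finset.mem_image.1 this with ⟨a', ha', he⟩
      rwa [hinj (hA'.1 ha') (hA.1 ha) he] at ha'
    · intro ha
      have : f a ∈ A.image f := by rw [hE]; exact Finset.mem_image_of_mem f ha
      rcases Finset.mem_image.1 this with ⟨a', ha', he⟩
      rwa [hinj (hA.1 ha') (hA'.1 ha) he] at ha'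
  · intro B hB
    simp only [Finset.mem_coe, Finset.mem_powersetCard] at hB
    have himg : (P.filter (fun a => f a ∈ B)).image f = B := by
      ext b
      simp only [Finset.mem_image, Finset.mem_filter]
      constructor
      · rintro ⟨a, ⟨_, hb⟩, rfl⟩; exact hb
      · intro hb
        rcases hsurj b (hB.1 hb) with ⟨a, haP, rfl⟩
        exact ⟨a, ⟨haP, hb⟩, rfl⟩
    refine ⟨P.filter (fun a => f a ∈ B), ?_, himg⟩
    simp only [Finset.mem_coe, Finset.mem_powersetCard]
    refine ⟨Finset.filter_subset _ _, ?_⟩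
    rw [← Finset.card_image_of_injOn (hinj.mono (by
      intro x hx; exact (Finset.mem_filter.1 hx).1)), himg, hB.2]
  · intro A hA
    exact (hFG A hA).symm

lemma erase_image_of_injOn {α β : Type*} [DecidableEq α] [DecidableEq β]
    {f : α → β} {A : Finset α} (hinj : Set.InjOn f A) {j : α} (hj : j ∈ A) :
    (A.image f).erase (f j) = (A.erase j).image f := by
  ext b
  simp only [Finset.mem_erase, Finset.mem_image]
  constructor
  · rintro ⟨hne, a, ha, rfl⟩
    exact ⟨a, ⟨fun h => hne (by rw [h]), ha⟩, rfl⟩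
  · rintro ⟨a, ha, rfl⟩
    rcases ha with ⟨hne, haA⟩
    exact ⟨fun h => hne (hinj haA hj h), a, haA, rfl⟩

lemma pow_of_sq_zero {R : Type*} [CommRing R] (x π : R) (h : π * π = 0) :
    ∀ n : ℕ, (x - π)^(n+1) = x^(n+1) - ((n+1 : ℕ) : R) * x^n * π := by
  intro n
  induction n with
  | zero => push_cast; ring
  | succ n ih =>
      rw [pow_succ, ih]
      push_cast
      linear_combination (((n:R)+1) * x^n) * h

lemma prod_expand {R : Type*} [CommRing R] {ι : Type*} [DecidableEq ι] (π : R) (hπ : π * π = 0)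
    (a b : ι → R) (A : Finset ι) :
    ∏ k ∈ A, (a k - b k * π) =
      (∏ k ∈ A, a k) - (∑ j ∈ A, b j * ∏ k ∈ A.erase j, a k) * π := by
  induction A using Finset.induction_on with
  | empty => simp
  | @insert i A hi ih =>
      rw [Finset.prod_insert hi, ih, Finset.prod_insert hi, Finset.sum_insert hi,
          Finset.erase_insert hi]
      have hrw : ∀ j ∈ A, b j * ∏ k ∈ (insert i A).erase j, a k
          = a i * (b j * ∏ k ∈ A.erase j, a k) := by
        intro j hj
        have hij : i ≠ j := by rintro rfl; exact hi hj
        rw [Finset.erase_insert_of_ne hij,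
          Finset.prod_insert (fun hmem => hi (Finset.mem_of_mem_erase hmem))]
        ring
      rw [Finset.sum_congr rfl hrw, ← Finset.mul_sum]
      linear_combination (b i * (∑ j ∈ A, b j * ∏ k ∈ A.erase j, a k)) * hπ



lemma key_bridge (s d p : ℕ) (hd : d ≤ p - 1) :
    ((∏ k ∈ Finset.Icc 1 (p-1), k^s : ℕ) : ℚ) * AMHS (p-1) (List.replicate d (s,1))
    = ((∑ A ∈ (Finset.Icc 1 (p-1)).powersetCard (p-1-d), ∏ k ∈ A, k^s : ℕ) : ℚ) := by
  rw [amhs_repl, Finset.mul_sum]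
  push_cast
  refine Finset.sum_nbij' (fun A => Finset.Icc 1 (p-1) \ A)
    (fun B => Finset.Icc 1 (p-1) \ B) ?_ ?_ ?_ ?_ ?_
  · intro A hA
    rw [Finset.mem_powersetCard] at hA ⊢
    refine ⟨Finset.sdiff_subset, ?_⟩
    rw [Finset.card_sdiff_of_subset hA.1, hA.2, Nat.card_Icc]
    omega
  · intro B hB
    rw [Finset.mem_powersetCard] at hB ⊢
    refine ⟨Finset.sdiff_subset, ?_⟩
    rw [Finset.card_sdiff_of_subset hB.1, hB.2, Nat.card_Icc]
    omega
  · intro A hA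
    exact Finset.sdiff_sdiff_eq_self (Finset.mem_powersetCard.1 hA).1
  · intro B hB
    exact Finset.sdiff_sdiff_eq_self (Finset.mem_powersetCard.1 hB).1
  · intro A hA
    have hsub := (Finset.mem_powersetCard.1 hA).1
    rw [← Finset.prod_sdiff hsub, mul_assoc, ← Finset.prod_mul_distrib]
    have : ∀ k ∈ A, (k:ℚ)^s * ((k:ℚ)^s)⁻¹ = 1 := by
      intro k hk
      have hk1 : 1 ≤ k := (Finset.mem_Icc.1 (hsub hk)).1
      rw [mul_inv_cancel₀]
      exact pow_ne_zero _ (Nat.cast_ne_zero.2 (by omega))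
    rw [Finset.prod_congr rfl this, Finset.prod_const_one, mul_one]

lemma val_wrap (p ℓ : ℕ) (hp : p.Prime) (s d : ℕ) (hd : d ≤ p - 1)
    (hdvd : p^ℓ ∣ (∑ A ∈ (Finset.Icc 1 (p-1)).powersetCard (p-1-d), ∏ k ∈ A, k^s)) :
    RatModEq p ℓ (AMHS (p-1) (List.replicate d (s,1))) 0 := by
  haveI : Fact p.Prime := ⟨hp⟩
  set Nz : ℕ := ∑ A ∈ (Finset.Icc 1 (p-1)).powersetCard (p-1-d), ∏ k ∈ A, k^s with hNz
  set Pn : ℕ := ∏ k ∈ Finset.Icc 1 (p-1), k^s with hPn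
  have hbridge := key_bridge s d p hd
  have hPn0 : Pn ≠ 0 := by
    rw [hPn]
    refine Finset.prod_ne_zero_iff.2 ?_
    intro k hk
    have : 1 ≤ k := (Finset.mem_Icc.1 hk).1
    positivity
  have hPnd : ¬ p ∣ Pn := by
    rw [hPn]
    intro hdvd'
    rcases (hp.prime.dvd_finset_prod_iff _).1 hdvd' with ⟨k, hk, hdk⟩
    have hk1 := (Finset.mem_Icc.1 hk).1
    have hk2 := (Finset.mem_Icc.1 hk).2
    have hpk := hp.dvd_of_dvd_pow hdk
    have := Nat.le_of_dvd (by omega) hpk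
    have := hp.two_le
    omega
  have hA : AMHS (p-1) (List.replicate d (s,1)) = (Nz : ℚ) / (Pn : ℚ) := by
    rw [eq_div_iff (by exact_mod_cast hPn0), mul_comm, hbridge]
  by_cases hN0 : Nz = 0
  · left; rw [hA, hN0]; simp
  · right
    rw [sub_zero, hA]
    have hq : (Nz : ℚ) ≠ 0 := Nat.cast_ne_zero.2 hN0
    have hr : (Pn : ℚ) ≠ 0 := Nat.cast_ne_zero.2 hPn0
    rw [padicValRat.div hq hr, padicValRat.of_nat, padicValRat.of_nat,
      padicValNat.eq_zero_of_not_dvd hPnd]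
    have : ℓ ≤ padicValNat p Nz := (padicValNat_dvd_iff_le hN0).1 hdvd
    omega




theorem even_core (s p e r : ℕ) (hp : p.Prime)
    (G : Finset (ZMod p) → ZMod p)
    (hscale : ∀ c : ZMod p, c ≠ 0 → ∀ A : Finset (ZMod p), A.card = e →
      G (A.image (fun x => c * x)) = c ^ r * G A)
    (hr : ¬ (p - 1) ∣ r) :
    ∑ B ∈ ((Finset.Icc 1 (p-1)).image (Nat.cast : ℕ → ZMod p)).powersetCard e, G B = 0 := by
  haveI : Fact p.Prime := ⟨hp⟩
  have hT : ∀ x : ZMod p,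
      x ∈ (Finset.Icc 1 (p-1)).image (Nat.cast : ℕ → ZMod p) ↔ x ≠ 0 := by
    intro x
    constructor
    · rintro hx
      rcases Finset.mem_image.1 hx with ⟨k, hk, rfl⟩
      rw [Finset.mem_Icc] at hk
      intro h0
      rw [ZMod.natCast_eq_zero_iff] at h0
      have := Nat.le_of_dvd (by omega) h0
      have := hp.two_le
      omega
    · intro hx
      refine Finset.mem_image.2 ⟨x.val, ?_, ?_⟩
      · rw [Finset.mem_Icc]
        have h1 : x.val ≠ 0 := fun h => hx ((ZMod.val_eq_zero x).1 h)
        have h2 : x.val < p := ZMod.val_lt x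
        omega
      · exact ZMod.natCast_rightInverse x
  obtain ⟨u, hu⟩ := IsCyclic.exists_generator (α := (ZMod p)ˣ)
  have horder : orderOf u = p - 1 := by
    rw [orderOf_eq_card_of_forall_mem_zpowers hu, Nat.card_eq_fintype_card, ZMod.card_units_eq_totient,
      Nat.totient_prime hp]
  set c : ZMod p := (u : ZMod p) with hc
  have hc0 : c ≠ 0 := u.ne_zero
  have hcpow : c ^ r ≠ 1 := by
    intro h
    have h' : u ^ r = 1 := by
      apply Units.ext
      rw [Units.val_pow_eq_pow_val]
      exact h
    exact hr (horder ▸ orderOf_dvd_of_pow_eq_one h')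
  set T := (Finset.Icc 1 (p-1)).image (Nat.cast : ℕ → ZMod p) with hTdef
  have htrans : ∑ A ∈ T.powersetCard e, G (A.image (fun x => c * x))
      = ∑ B ∈ T.powersetCard e, G B := by
    refine sum_powersetCard_bij T T (fun x => c * x) ?_ ?_ ?_ e _ G ?_
    · intro x hx
      exact (hT _).2 (mul_ne_zero hc0 ((hT x).1 hx))
    · intro a _ b _ h
      exact mul_left_cancel₀ hc0 h
    · intro b hb
      refine ⟨c⁻¹ * b, (hT _).2 (mul_ne_zero (inv_ne_zero hc0) ((hT b).1 hb)), ?_⟩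
      field_simp
    · intro A _
      rfl
  have hsc : ∑ A ∈ T.powersetCard e, G (A.image (fun x => c * x))
      = c ^ r * ∑ B ∈ T.powersetCard e, G B := by
    rw [Finset.mul_sum]
    refine Finset.sum_congr rfl ?_
    intro A hA
    exact hscale c hc0 A (Finset.mem_powersetCard.1 hA).2
  have hfin : (c ^ r - 1) * ∑ B ∈ T.powersetCard e, G B = 0 := by
    rw [sub_mul, one_mul, ← hsc, htrans, sub_self]
  rcases mul_eq_zero.1 hfin with h | h
  · exact absurd (by rwa [sub_eq_zero] at h) hcpow
  · exact h

section
variable (s d p : ℕ)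

lemma cast_injOn (hp : p.Prime) :
    Set.InjOn (Nat.cast : ℕ → ZMod p) (Finset.Icc 1 (p-1)) := by
  haveI : Fact p.Prime := ⟨hp⟩
  intro a ha b hb h
  simp only [Finset.coe_Icc, Set.mem_Icc] at ha hb
  have := hp.two_le
  have ha' : a < p := by omega
  have hb' : b < p := by omega
  have := congrArg ZMod.val h
  rwa [ZMod.val_cast_of_lt ha', ZMod.val_cast_of_lt hb'] at this

lemma Nz_dvd (hs : 0 < s) (hp : p.Prime) (hd : 1 ≤ d) (hdp : d + 2 ≤ p)
    (h1 : ¬ (p - 1) ∣ d * s) :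
    p ∣ ∑ A ∈ (Finset.Icc 1 (p-1)).powersetCard (p-1-d), ∏ k ∈ A, k^s := by
  haveI : Fact p.Prime := ⟨hp⟩
  set e := p - 1 - d with he
  rw [← ZMod.natCast_eq_zero_iff]
  push_cast
  have hinj := cast_injOn p hp
  have htrans : ∑ A ∈ (Finset.Icc 1 (p-1)).powersetCard e, ∏ k ∈ A, ((k : ZMod p))^s
      = ∑ B ∈ ((Finset.Icc 1 (p-1)).image (Nat.cast : ℕ → ZMod p)).powersetCard e,
          ∏ x ∈ B, x^s := by
    refine sum_powersetCard_bij _ _ _ (fun a ha => Finset.mem_image_of_mem _ ha) hinj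
      (fun b hb => by rcases Finset.mem_image.1 hb with ⟨a, ha, rfl⟩; exact ⟨a, ha, rfl⟩)
      e _ _ ?_
    · intro A hA
      have hsub := (Finset.mem_powersetCard.1 hA).1
      exact Finset.prod_image (fun x hx y hy h => hinj (hsub hx) (hsub hy) h)
  rw [htrans]
  refine even_core s p e (s * e) hp _ ?_ ?_
  · intro c hc0 A hcard
    have hinjc : ∀ x ∈ A, ∀ y ∈ A, c * x = c * y → x = y :=
      fun x _ y _ h => mul_left_cancel₀ hc0 h
    rw [Finset.prod_image hinjc]
    simp_rw [mul_pow]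
    rw [Finset.prod_mul_distrib, Finset.prod_const, hcard, ← pow_mul]
  · intro hdvd
    apply h1
    have hsplit : s * (p - 1) = s * e + d * s := by
      rw [mul_comm d s, ← Nat.mul_add]
      congr 1
      omega
    have hP : (p - 1) ∣ s * (p - 1) := Dvd.dvd.mul_left dvd_rfl s
    have hdd := Nat.dvd_sub hP hdvd
    have key : s * (p-1) - s * e = d * s := by rw [hsplit]; omega
    rwa [key] at hdd

lemma Mz_dvd (hs : 0 < s) (hp : p.Prime) (hd : 1 ≤ d) (hdp : d + 2 ≤ p)
    (h2d : ¬ (p - 1) ∣ d * s + 1) :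
    p ∣ ∑ A ∈ (Finset.Icc 1 (p-1)).powersetCard (p-1-d),
        ∑ j ∈ A, j^(s-1) * ∏ k ∈ A.erase j, k^s := by
  haveI : Fact p.Prime := ⟨hp⟩
  set e := p - 1 - d with he
  have he1 : 1 ≤ e := by have := hp.two_le; omega
  rw [← ZMod.natCast_eq_zero_iff]
  push_cast
  have hinj := cast_injOn p hp
  have htrans : ∑ A ∈ (Finset.Icc 1 (p-1)).powersetCard e,
        ∑ j ∈ A, ((j : ZMod p))^(s-1) * ∏ k ∈ A.erase j, ((k : ZMod p))^s
      = ∑ B ∈ ((Finset.Icc 1 (p-1)).image (Nat.cast : ℕ → ZMod p)).powersetCard e,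
          ∑ x ∈ B, x^(s-1) * ∏ y ∈ B.erase x, y^s := by
    refine sum_powersetCard_bij _ _ _ (fun a ha => Finset.mem_image_of_mem _ ha) hinj
      (fun b hb => by rcases Finset.mem_image.1 hb with ⟨a, ha, rfl⟩; exact ⟨a, ha, rfl⟩)
      e _ _ ?_
    · intro A hA
      have hsub := (Finset.mem_powersetCard.1 hA).1
      have hinjA : ∀ x ∈ A, ∀ y ∈ A, (x : ZMod p) = (y : ZMod p) → x = y :=
        fun x hx y hy h => hinj (hsub hx) (hsub hy) h
      rw [Finset.sum_image hinjA]
      refine Finset.sum_congr rfl ?_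
      intro j hj
      rw [erase_image_of_injOn (hinj.mono (by exact_mod_cast hsub)) hj,
        Finset.prod_image (fun x hx y hy h =>
          hinj (hsub (Finset.mem_of_mem_erase hx)) (hsub (Finset.mem_of_mem_erase hy)) h)]
  rw [htrans]
  refine even_core s p e (s * e - 1) hp _ ?_ ?_
  · intro c hc0 A hcard
    have hinjc : ∀ x ∈ A, ∀ y ∈ A, c * x = c * y → x = y :=
      fun x _ y _ h => mul_left_cancel₀ hc0 h
    rw [Finset.sum_image hinjc, Finset.mul_sum]
    refine Finset.sum_congr rfl ?_
    intro j hj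
    rw [erase_image_of_injOn ((mul_right_injective₀ hc0).injOn) hj,
      Finset.prod_image (fun x _ y _ h => mul_left_cancel₀ hc0 h)]
    simp_rw [mul_pow]
    rw [Finset.prod_mul_distrib, Finset.prod_const, Finset.card_erase_of_mem hj, hcard]
    have hee : s * e - 1 = (s - 1) + s * (e - 1) := by
      have h1 : s * e = s * (e - 1) + s := by
        rw [← Nat.mul_succ]
        congr 1
        omega
      omega
    rw [hee, pow_add]
    ring
  · intro hdvd
    apply h2d
    have hsplit : s * (p - 1) = s * e + d * s := by
      rw [mul_comm d s, ← Nat.mul_add]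
      congr 1
      omega
    have hse1 : 1 ≤ s * e := Nat.mul_le_mul hs he1
    have hP : (p - 1) ∣ s * (p - 1) := Dvd.dvd.mul_left dvd_rfl s
    have hdd := Nat.dvd_sub hP hdvd
    have key : s * (p-1) - (s * e - 1) = d * s + 1 := by rw [hsplit]; omega
    rwa [key] at hdd

end



lemma two_Nz_dvd (s' d p : ℕ) (hp : p.Prime) (hodd : Odd p) (hd : 1 ≤ d) (hdp : d + 2 ≤ p)
    (hds : Odd (d * (s'+1)))
    (hM : p ∣ ∑ A ∈ (Finset.Icc 1 (p-1)).powersetCard (p-1-d),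
        ∑ j ∈ A, j^s' * ∏ k ∈ A.erase j, k^(s'+1)) :
    p^2 ∣ 2 * ∑ A ∈ (Finset.Icc 1 (p-1)).powersetCard (p-1-d), ∏ k ∈ A, k^(s'+1) := by
  haveI : Fact p.Prime := ⟨hp⟩
  haveI : NeZero (p^2) := ⟨pow_ne_zero 2 hp.pos.ne'⟩
  have hp2 := hp.two_le
  set P := Finset.Icc 1 (p-1) with hPdef
  set e := p - 1 - d with he
  -- parity
  have hsplit : (s'+1) * (p - 1) = (s'+1) * e + d * (s'+1) := by
    rw [mul_comm d (s'+1), ← Nat.mul_add]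
    congr 1
    omega
  have hpar : Odd ((s'+1) * e) := by
    have hEpm : Even ((s'+1) * (p-1)) := by
      refine Even.mul_left ?_ _
      exact Nat.Odd.sub_odd hodd odd_one
    have hle : d * (s'+1) ≤ (s'+1) * (p-1) := by omega
    have := Nat.Even.sub_odd hle hEpm hds
    have heq : (s'+1) * (p-1) - d * (s'+1) = (s'+1) * e := by omega
    rwa [heq] at this
  obtain ⟨m, hm⟩ := hM
  rw [← ZMod.natCast_eq_zero_iff]
  push_cast
  set R := ZMod (p^2)
  set π : R := (p : R) with hπdef
  have hπ : π * π = 0 := by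
    rw [hπdef, ← Nat.cast_mul, ← pow_two, ZMod.natCast_self]
  set S : R := ∑ A ∈ P.powersetCard e, ∏ k ∈ A, ((k : ℕ) : R)^(s'+1) with hSdef
  have hstep1 : ∑ A ∈ P.powersetCard e, ∏ k ∈ A.image (fun k => p - k), ((k:ℕ) : R)^(s'+1)
      = S := by
    rw [hSdef]
    refine sum_powersetCard_bij P P (fun k => p - k) ?_ ?_ ?_ e _ _ ?_
    · intro a ha
      simp only [hPdef, Finset.mem_Icc] at ha ⊢
      omega
    · intro a ha b hb h
      simp only [hPdef, Finset.coe_Icc, Set.mem_Icc] at ha hb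
      simp only [] at h
      omega
    · intro b hb
      simp only [hPdef, Finset.mem_Icc] at hb
      refine ⟨p - b, ?_, ?_⟩
      · simp only [hPdef, Finset.mem_Icc]
        omega
      · show p - (p - b) = b
        omega
    · intro A _
      rfl
  have hstep2 : ∀ A ∈ P.powersetCard e,
      ∏ k ∈ A.image (fun k => p - k), ((k:ℕ) : R)^(s'+1)
      = ((s'+1 : ℕ) : R) * (∑ j ∈ A, ((j:ℕ):R)^s' * ∏ k ∈ A.erase j, ((k:ℕ):R)^(s'+1)) * π
        - ∏ k ∈ A, ((k:ℕ):R)^(s'+1) := by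
    intro A hA
    obtain ⟨hsub, hcard⟩ := Finset.mem_powersetCard.1 hA
    have hmem : ∀ k ∈ A, 1 ≤ k ∧ k ≤ p - 1 := by
      intro k hk
      have := hsub hk
      rw [hPdef, Finset.mem_Icc] at this
      exact this
    rw [Finset.prod_image (fun x hx y hy h => by
      have := hmem x hx; have := hmem y hy; omega)]
    have hfac : ∀ k ∈ A, ((p - k : ℕ) : R)^(s'+1)
        = (-1 : R)^(s'+1) * (((k:ℕ):R)^(s'+1) - (((s'+1:ℕ):R) * ((k:ℕ):R)^s') * π) := by
      intro k hk
      have hk' := hmem k hk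
      have hc : ((p - k : ℕ) : R) = -(((k:ℕ):R) - π) := by
        rw [Nat.cast_sub (by omega)]
        rw [hπdef]
        ring
      rw [hc, neg_pow, pow_of_sq_zero _ _ hπ s']
    rw [Finset.prod_congr rfl hfac, Finset.prod_mul_distrib, Finset.prod_const, hcard,
      ← pow_mul, Odd.neg_one_pow hpar,
      prod_expand π hπ (fun k => ((k:ℕ):R)^(s'+1)) (fun k => ((s'+1:ℕ):R) * ((k:ℕ):R)^s') A]
    have hY : (∑ j ∈ A, (((s'+1:ℕ):R) * ((j:ℕ):R)^s') * ∏ k ∈ A.erase j, ((k:ℕ):R)^(s'+1))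
        = ((s'+1:ℕ):R) * ∑ j ∈ A, ((j:ℕ):R)^s' * ∏ k ∈ A.erase j, ((k:ℕ):R)^(s'+1) := by
      rw [Finset.mul_sum]
      refine Finset.sum_congr rfl ?_
      intro j _
      ring
    rw [hY]
    ring
  have hS : S = ((s'+1:ℕ):R) * (∑ A ∈ P.powersetCard e,
        ∑ j ∈ A, ((j:ℕ):R)^s' * ∏ k ∈ A.erase j, ((k:ℕ):R)^(s'+1)) * π - S := by
    conv_lhs => rw [← hstep1, Finset.sum_congr rfl hstep2]
    rw [Finset.sum_sub_distrib, ← hSdef]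
    congr 1
    rw [← Finset.sum_mul, ← Finset.mul_sum]
  have hMcast : ((∑ A ∈ P.powersetCard e, ∑ j ∈ A, j^s' * ∏ k ∈ A.erase j, k^(s'+1) : ℕ) : R)
      = ∑ A ∈ P.powersetCard e, ∑ j ∈ A, ((j:ℕ):R)^s' * ∏ k ∈ A.erase j, ((k:ℕ):R)^(s'+1) := by
    push_cast
    simp only [R, Nat.cast_sum, Nat.cast_mul, Nat.cast_prod, Nat.cast_pow]
  have hMzero : (∑ A ∈ P.powersetCard e,
      ∑ j ∈ A, ((j:ℕ):R)^s' * ∏ k ∈ A.erase j, ((k:ℕ):R)^(s'+1)) * π = 0 := by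
    rw [← hMcast, hm, Nat.cast_mul]
    linear_combination ((m:ℕ):R) * hπ
  have : (2 : R) * S = 0 := by
    have h2S : (2 : R) * S = ((s'+1:ℕ):R) * ((∑ A ∈ P.powersetCard e,
        ∑ j ∈ A, ((j:ℕ):R)^s' * ∏ k ∈ A.erase j, ((k:ℕ):R)^(s'+1)) * π) := by
      linear_combination hS
    rw [h2S, hMzero, mul_zero]
  exact this

end Aux

/-- Theorem 1.1 / `thm:homogeneousWols`.
For positive integers `s, d` and an odd prime `p` with `p ≥ d + 2` such that `p - 1`
divides none of `d*s` and of `k*s + 1` for `k = 1, …, d`, the homogeneous multiple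
harmonic sum `H_{p-1}({s}^d)` vanishes mod `p` if `d*s` is even, and mod `p²` if
`d*s` is odd. -/
theorem homogeneous_wolstenholme (s d : ℕ) (hs : 0 < s) (hd : 0 < d)
    (p : ℕ) (hp : p.Prime) (hodd : Odd p) (hpd : d + 2 ≤ p)
    (h1 : ¬ (p - 1) ∣ d * s) (h2 : ∀ k, 1 ≤ k → k ≤ d → ¬ (p - 1) ∣ k * s + 1) :
    (Even (d * s) → RatModEq p 1 (AMHS (p - 1) (List.replicate d (s, (1 : ℚ)))) 0) ∧
    (Odd (d * s) → RatModEq p 2 (AMHS (p - 1) (List.replicate d (s, (1 : ℚ)))) 0) := by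
  have hp2 := hp.two_le
  have hd1 : d ≤ p - 1 := by omega
  constructor
  · intro _
    apply val_wrap p 1 hp s d hd1
    rw [pow_one]
    exact Nz_dvd s d p hs hp hd hpd h1
  · intro hds
    apply val_wrap p 2 hp s d hd1
    obtain ⟨s', rfl⟩ : ∃ s', s = s' + 1 := ⟨s - 1, by omega⟩
    have hM : p ∣ ∑ A ∈ (Finset.Icc 1 (p-1)).powersetCard (p-1-d),
        ∑ j ∈ A, j^s' * ∏ k ∈ A.erase j, k^(s'+1) := by
      have := Mz_dvd (s'+1) d p hs hp hd hpd (h2 d hd le_rfl)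
      simpa using this
    have h2N := two_Nz_dvd s' d p hp hodd hd hpd hds hM
    have hcop : Nat.Coprime (p^2) 2 := by
      refine Nat.Coprime.pow_left 2 ?_
      have h2p : ¬ 2 ∣ p := by
        exact fun h => (Nat.not_even_iff_odd.2 hodd) (even_iff_two_dvd.mpr h)
      exact ((Nat.prime_two.coprime_iff_not_dvd).2 h2p).symm
    exact hcop.dvd_of_dvd_mul_left h2N
end

section
/- Fix a positive integer ℓ. For each prime p let R_p = ℤ/p^ℓℤ, and let 𝒜_ℓ be the quotient of the product ring Π_p R_p (product over all primes p) by the ideal ⊕_p R_p of elements with finite support. Define ι_ℓ : ℚ → 𝒜_ℓ by sending r to the class of the family (ι_{p,ℓ}(r))_p, where ι_{p,ℓ}(r) = r mod p^ℓ if the p-adic valuation of r is ≥ 0 (interpreting r mod p^ℓ via the ring of p-integral rationals), and ι_{p,ℓ}(r) = 0 otherwise, with ι_ℓ(0) = 0. Then ι_ℓ is an injective ring homomorphism, i.e., it embeds ℚ into 𝒜_ℓ as a ℚ-algebra. -/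
open scoped Classical

/-- The product ring `Π_p ℤ/p^ℓℤ` over all primes `p`. -/
abbrev PrimeProd (ℓ : ℕ) : Type := ∀ p : Nat.Primes, ZMod ((p : ℕ) ^ ℓ)

/-- The ideal `⊕_p ℤ/p^ℓℤ` of finitely supported families in `Π_p ℤ/p^ℓℤ`. -/
def finSuppIdeal (ℓ : ℕ) : Ideal (PrimeProd ℓ) where
  carrier := {x | {p : Nat.Primes | x p ≠ 0}.Finite}
  zero_mem' := by
    show ({p : Nat.Primes | (0 : PrimeProd ℓ) p ≠ 0}).Finite
    have h : {p : Nat.Primes | (0 : PrimeProd ℓ) p ≠ 0} = ∅ := by ext p; simp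
    rw [h]; exact Set.finite_empty
  add_mem' := by
    intro a b ha hb
    refine (ha.union hb).subset ?_
    intro p hp
    simp only [Set.mem_setOf_eq, Set.mem_union] at hp ⊢
    by_contra hc
    push_neg at hc
    exact hp (by simp [Pi.add_apply, hc.1, hc.2])
  smul_mem' := by
    intro c x hx
    refine hx.subset ?_
    intro p hp
    simp only [Set.mem_setOf_eq] at hp ⊢
    intro h
    exact hp (by simp [h])

/-- The adele-like ring `𝒜_ℓ = (Π_p ℤ/p^ℓℤ) / (⊕_p ℤ/p^ℓℤ)`. -/
abbrev AdeleLike (ℓ : ℕ) : Type := PrimeProd ℓ ⧸ finSuppIdeal ℓ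

/-- The component map `ι_{p,ℓ} : ℚ → ℤ/p^ℓℤ`: if `ord_p(r) ≥ 0`, reduce `r`
(which is then `p`-integral) mod `p^ℓ` as `num · den⁻¹`; otherwise send `r` to `0`.
(Note `ι_{p,ℓ}(0) = 0` since the numerator of `0` is `0`.) -/
noncomputable def iotaComp (ℓ : ℕ) (p : Nat.Primes) (r : ℚ) : ZMod ((p : ℕ) ^ ℓ) :=
  if 0 ≤ padicValRat p r then
    (r.num : ZMod ((p : ℕ) ^ ℓ)) * (r.den : ZMod ((p : ℕ) ^ ℓ))⁻¹
  else 0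

lemma den_not_dvd (p : Nat.Primes) (r : ℚ) (n d : ℤ)
    (hd : ¬ ((p : ℕ) ∣ d.natAbs)) (h : (d : ℚ) * r = n) : ¬ ((p : ℕ) ∣ r.den) := by
  have hd0 : d ≠ 0 := by rintro rfl; simp at hd
  have hdQ : (d : ℚ) ≠ 0 := Int.cast_ne_zero.mpr hd0
  have hr : r = Rat.divInt n d := by
    rw [Rat.divInt_eq_div, ← h]; field_simp
  intro hdvd
  have h1 : (r.den : ℤ) ∣ d := by rw [hr]; exact Rat.den_dvd n d
  have h2 : r.den ∣ d.natAbs := Int.natCast_dvd_natCast.mp ((Int.dvd_natAbs).mpr h1)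
  exact hd (hdvd.trans h2)

lemma natAbs_unit (ℓ : ℕ) (p : Nat.Primes) (d : ℤ) (hd : ¬ ((p : ℕ) ∣ d.natAbs)) :
    IsUnit ((d : ℤ) : ZMod ((p:ℕ)^ℓ)) := by
  have hcopd : Nat.Coprime d.natAbs ((p:ℕ)^ℓ) :=
    Nat.Coprime.pow_right _ ((Nat.Prime.coprime_iff_not_dvd p.2).mpr hd).symm
  have h := (ZMod.isUnit_iff_coprime d.natAbs _).mpr hcopd
  rcases Int.natAbs_eq d with he | he
  · rw [he, Int.cast_natCast]; exact h
  · rw [he, Int.cast_neg, Int.cast_natCast]; exact h.neg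

lemma key (ℓ : ℕ) (p : Nat.Primes) (r : ℚ) (n d : ℤ)
    (hd : ¬ ((p : ℕ) ∣ d.natAbs)) (h : (d : ℚ) * r = n) :
    iotaComp ℓ p r = (n : ZMod ((p:ℕ)^ℓ)) * (d : ZMod ((p:ℕ)^ℓ))⁻¹ := by
  have hden : ¬ ((p : ℕ) ∣ r.den) := den_not_dvd p r n d hd h
  have hcop : Nat.Coprime r.den ((p:ℕ)^ℓ) :=
    Nat.Coprime.pow_right _ ((Nat.Prime.coprime_iff_not_dvd p.2).mpr hden).symm
  have hu_den : IsUnit ((r.den : ℕ) : ZMod ((p:ℕ)^ℓ)) := (ZMod.isUnit_iff_coprime _ _).mpr hcop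
  have hu_d : IsUnit ((d : ℤ) : ZMod ((p:ℕ)^ℓ)) := natAbs_unit ℓ p d hd
  have hval : 0 ≤ padicValRat p r := by
    rcases eq_or_ne r 0 with rfl | hr0
    · simp [padicValRat]
    · unfold padicValRat
      rw [padicValNat.eq_zero_of_not_dvd hden]
      simp only [Nat.cast_zero, sub_zero]
      exact Int.natCast_nonneg _
  have hZ : d * r.num = n * (r.den : ℤ) := by
    have hq : (d : ℚ) * r.num = (n : ℚ) * (r.den : ℚ) := by
      have hnum : (r.num : ℚ) = r * r.den := (Rat.mul_den_eq_num r).symm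
      rw [hnum, ← h]; ring
    exact_mod_cast hq
  have hcast : ((d : ℤ) : ZMod ((p:ℕ)^ℓ)) * (r.num : ZMod ((p:ℕ)^ℓ))
      = (n : ZMod ((p:ℕ)^ℓ)) * ((r.den : ℕ) : ZMod ((p:ℕ)^ℓ)) := by
    have := congrArg (fun z : ℤ => (z : ZMod ((p:ℕ)^ℓ))) hZ
    push_cast at this
    exact_mod_cast this
  have e1 : ((r.den : ℕ) : ZMod ((p:ℕ)^ℓ)) * ((r.den : ℕ) : ZMod ((p:ℕ)^ℓ))⁻¹ = 1 :=
    ZMod.mul_inv_of_unit _ hu_den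
  have e2 : ((d : ℤ) : ZMod ((p:ℕ)^ℓ)) * ((d : ℤ) : ZMod ((p:ℕ)^ℓ))⁻¹ = 1 :=
    ZMod.mul_inv_of_unit _ hu_d
  rw [iotaComp, if_pos hval]
  calc (r.num : ZMod ((p:ℕ)^ℓ)) * ((r.den:ℕ) : ZMod ((p:ℕ)^ℓ))⁻¹
      = ((d : ℤ) : ZMod ((p:ℕ)^ℓ)) * (r.num : ZMod ((p:ℕ)^ℓ))
          * ((r.den:ℕ) : ZMod ((p:ℕ)^ℓ))⁻¹ * ((d : ℤ) : ZMod ((p:ℕ)^ℓ))⁻¹ := by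
        rw [show ((d : ℤ) : ZMod ((p:ℕ)^ℓ)) * (r.num : ZMod ((p:ℕ)^ℓ))
          * ((r.den:ℕ) : ZMod ((p:ℕ)^ℓ))⁻¹ * ((d : ℤ) : ZMod ((p:ℕ)^ℓ))⁻¹
          = (r.num : ZMod ((p:ℕ)^ℓ)) * ((r.den:ℕ) : ZMod ((p:ℕ)^ℓ))⁻¹
            * (((d : ℤ) : ZMod ((p:ℕ)^ℓ)) * ((d : ℤ) : ZMod ((p:ℕ)^ℓ))⁻¹) by ring,
          e2, mul_one]
    _ = (n : ZMod ((p:ℕ)^ℓ)) * ((r.den:ℕ) : ZMod ((p:ℕ)^ℓ))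
          * ((r.den:ℕ) : ZMod ((p:ℕ)^ℓ))⁻¹ * ((d : ℤ) : ZMod ((p:ℕ)^ℓ))⁻¹ := by rw [hcast]
    _ = (n : ZMod ((p:ℕ)^ℓ)) * ((d : ℤ) : ZMod ((p:ℕ)^ℓ))⁻¹ := by
        rw [mul_assoc (n : ZMod ((p:ℕ)^ℓ)), e1, mul_one]

-- pointwise good-prime lemmas
section pt
variable (ℓ : ℕ) (p : Nat.Primes) (a b : ℚ)

lemma prod_not_dvd (hda : ¬ ((p:ℕ) ∣ a.den)) (hdb : ¬ ((p:ℕ) ∣ b.den)) :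
    ¬ ((p:ℕ) ∣ ((a.den * b.den : ℤ)).natAbs) := by
  simp only [Int.natAbs_mul, Int.natAbs_natCast]
  intro h
  rcases (Nat.Prime.dvd_mul p.2).mp h with h | h
  · exact hda (by simpa using h)
  · exact hdb (by simpa using h)

lemma pt_add (hda : ¬ ((p:ℕ) ∣ a.den)) (hdb : ¬ ((p:ℕ) ∣ b.den)) :
    iotaComp ℓ p (a + b) = iotaComp ℓ p a + iotaComp ℓ p b := by
  have hd := prod_not_dvd p a b hda hdb
  have h1 : (a.den : ℚ) * a = a.num := by rw [mul_comm]; exact Rat.mul_den_eq_num a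
  have h2 : (b.den : ℚ) * b = b.num := by rw [mul_comm]; exact Rat.mul_den_eq_num b
  have kA := key ℓ p (a + b) (a.num * b.den + b.num * a.den) (a.den * b.den) hd
    (by push_cast; linear_combination (b.den : ℚ) * h1 + (a.den : ℚ) * h2)
  have ka := key ℓ p a (a.num * b.den) (a.den * b.den) hd
    (by push_cast; linear_combination (b.den : ℚ) * h1)
  have kb := key ℓ p b (b.num * a.den) (a.den * b.den) hd
    (by push_cast; linear_combination (a.den : ℚ) * h2)
  rw [kA, ka, kb]; push_cast; ring

lemma pt_sub (hda : ¬ ((p:ℕ) ∣ a.den)) (hdb : ¬ ((p:ℕ) ∣ b.den)) :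
    iotaComp ℓ p (a - b) = iotaComp ℓ p a - iotaComp ℓ p b := by
  have hd := prod_not_dvd p a b hda hdb
  have h1 : (a.den : ℚ) * a = a.num := by rw [mul_comm]; exact Rat.mul_den_eq_num a
  have h2 : (b.den : ℚ) * b = b.num := by rw [mul_comm]; exact Rat.mul_den_eq_num b
  have kA := key ℓ p (a - b) (a.num * b.den - b.num * a.den) (a.den * b.den) hd
    (by push_cast; linear_combination (b.den : ℚ) * h1 - (a.den : ℚ) * h2)
  have ka := key ℓ p a (a.num * b.den) (a.den * b.den) hd
    (by push_cast; linear_combination (b.den : ℚ) * h1)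
  have kb := key ℓ p b (b.num * a.den) (a.den * b.den) hd
    (by push_cast; linear_combination (a.den : ℚ) * h2)
  rw [kA, ka, kb]; push_cast; ring

lemma pt_mul (hda : ¬ ((p:ℕ) ∣ a.den)) (hdb : ¬ ((p:ℕ) ∣ b.den)) :
    iotaComp ℓ p (a * b) = iotaComp ℓ p a * iotaComp ℓ p b := by
  have hd := prod_not_dvd p a b hda hdb
  have h1 : (a.den : ℚ) * a = a.num := by rw [mul_comm]; exact Rat.mul_den_eq_num a
  have h2 : (b.den : ℚ) * b = b.num := by rw [mul_comm]; exact Rat.mul_den_eq_num b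
  have kA := key ℓ p (a * b) (a.num * b.num) (a.den * b.den) hd
    (by push_cast; linear_combination ((b.den : ℚ) * b) * h1 + (a.num : ℚ) * h2)
  have ka := key ℓ p a (a.num * b.den) (a.den * b.den) hd
    (by push_cast; linear_combination (b.den : ℚ) * h1)
  have kb := key ℓ p b (b.num * a.den) (a.den * b.den) hd
    (by push_cast; linear_combination (a.den : ℚ) * h2)
  have e2 := ZMod.mul_inv_of_unit _ (natAbs_unit ℓ p (a.den * b.den) hd)
  rw [kA, ka, kb]
  rw [show ((a.num * b.den : ℤ) : ZMod ((p:ℕ)^ℓ)) * ((a.den * b.den : ℤ) : ZMod ((p:ℕ)^ℓ))⁻¹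
      * (((b.num * a.den : ℤ) : ZMod ((p:ℕ)^ℓ)) * ((a.den * b.den : ℤ) : ZMod ((p:ℕ)^ℓ))⁻¹)
      = ((a.num * b.den : ℤ) : ZMod ((p:ℕ)^ℓ)) * ((b.num * a.den : ℤ) : ZMod ((p:ℕ)^ℓ))
        * ((a.den * b.den : ℤ) : ZMod ((p:ℕ)^ℓ))⁻¹ * ((a.den * b.den : ℤ) : ZMod ((p:ℕ)^ℓ))⁻¹
      from by ring]
  have : ((a.num * b.den : ℤ) : ZMod ((p:ℕ)^ℓ)) * ((b.num * a.den : ℤ) : ZMod ((p:ℕ)^ℓ))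
      = ((a.num * b.num : ℤ) : ZMod ((p:ℕ)^ℓ)) * ((a.den * b.den : ℤ) : ZMod ((p:ℕ)^ℓ)) := by
    push_cast; ring
  rw [this, mul_assoc, mul_assoc]
  rw [show ((a.den * b.den : ℤ) : ZMod ((p:ℕ)^ℓ))
      * (((a.den * b.den : ℤ) : ZMod ((p:ℕ)^ℓ))⁻¹ * ((a.den * b.den : ℤ) : ZMod ((p:ℕ)^ℓ))⁻¹)
      = ((a.den * b.den : ℤ) : ZMod ((p:ℕ)^ℓ)) * ((a.den * b.den : ℤ) : ZMod ((p:ℕ)^ℓ))⁻¹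
        * ((a.den * b.den : ℤ) : ZMod ((p:ℕ)^ℓ))⁻¹ from by ring, e2, one_mul]

end pt

lemma dvd_set_finite (m : ℕ) (hm : m ≠ 0) : {p : Nat.Primes | (p:ℕ) ∣ m}.Finite := by
  have : {p : Nat.Primes | (p:ℕ) ∣ m} ⊆ (fun p : Nat.Primes => (p:ℕ)) ⁻¹' {n | n ∣ m} := by
    intro p hp; exact hp
  refine Set.Finite.subset (Set.Finite.preimage ?_ ?_) this
  · exact Nat.Primes.coe_nat_injective.injOn
  · have : {n : ℕ | n ∣ m} ⊆ Set.Icc 0 m := by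
      intro n hn; exact ⟨Nat.zero_le n, Nat.le_of_dvd (Nat.pos_of_ne_zero hm) hn⟩
    exact (Set.finite_Icc 0 m).subset this

/-- The diagonal map `ι_ℓ : ℚ → 𝒜_ℓ`. -/
noncomputable def iota (ℓ : ℕ) (r : ℚ) : AdeleLike ℓ :=
  Ideal.Quotient.mk (finSuppIdeal ℓ) (fun p => iotaComp ℓ p r)

/-- Proposition `prop:embed`. The map `ι_ℓ : ℚ → 𝒜_ℓ` is an
injective ring homomorphism, i.e. it embeds `ℚ` into `𝒜_ℓ` as a `ℚ`-algebra. -/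
theorem iota_injective_ring_hom (ℓ : ℕ) (hℓ : 0 < ℓ) :
    iota ℓ 0 = 0 ∧ iota ℓ 1 = 1 ∧
    (∀ a b : ℚ, iota ℓ (a + b) = iota ℓ a + iota ℓ b) ∧
    (∀ a b : ℚ, iota ℓ (a * b) = iota ℓ a * iota ℓ b) ∧
    Function.Injective (iota ℓ) := by
  refine ⟨?_, ?_, ?_, ?_, ?_⟩
  · have h0 : (fun p => iotaComp ℓ p 0) = (0 : PrimeProd ℓ) := by
      funext p; simp [iotaComp]
    rw [iota, h0, map_zero]
  · have h1 : (fun p => iotaComp ℓ p 1) = (1 : PrimeProd ℓ) := by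
      funext p; simp [iotaComp, ZMod.inv_one]
    rw [iota, h1, map_one]
  · intro a b
    rw [iota, iota, iota, ← map_add, Ideal.Quotient.eq]
    show {p : Nat.Primes | iotaComp ℓ p (a + b) - (iotaComp ℓ p a + iotaComp ℓ p b) ≠ 0}.Finite
    refine (dvd_set_finite (a.den * b.den) (Nat.mul_ne_zero (Rat.den_pos a).ne' (Rat.den_pos b).ne')).subset ?_
    intro p hp
    simp only [Set.mem_setOf_eq] at hp ⊢
    by_contra hnd
    have hda : ¬ ((p:ℕ) ∣ a.den) := fun h => hnd (h.mul_right _)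
    have hdb : ¬ ((p:ℕ) ∣ b.den) := fun h => hnd (h.mul_left _)
    exact hp (by rw [pt_add ℓ p a b hda hdb]; ring)
  · intro a b
    rw [iota, iota, iota, ← map_mul, Ideal.Quotient.eq]
    show {p : Nat.Primes | iotaComp ℓ p (a * b) - (iotaComp ℓ p a * iotaComp ℓ p b) ≠ 0}.Finite
    refine (dvd_set_finite (a.den * b.den) (Nat.mul_ne_zero (Rat.den_pos a).ne' (Rat.den_pos b).ne')).subset ?_
    intro p hp
    simp only [Set.mem_setOf_eq] at hp ⊢
    by_contra hnd
    have hda : ¬ ((p:ℕ) ∣ a.den) := fun h => hnd (h.mul_right _)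
    have hdb : ¬ ((p:ℕ) ∣ b.den) := fun h => hnd (h.mul_left _)
    exact hp (by rw [pt_mul ℓ p a b hda hdb]; ring)
  · intro a b hab
    by_contra hne
    have hsub : a - b ≠ 0 := sub_ne_zero.mpr hne
    rw [iota, iota, Ideal.Quotient.eq] at hab
    have hfin : {p : Nat.Primes | iotaComp ℓ p a - iotaComp ℓ p b ≠ 0}.Finite := hab
    set M : ℕ := a.den * b.den * (a - b).num.natAbs with hMdef
    have hM : M ≠ 0 := by
      refine Nat.mul_ne_zero (Nat.mul_ne_zero (Rat.den_pos a).ne' (Rat.den_pos b).ne') ?_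
      exact Int.natAbs_ne_zero.mpr (Rat.num_ne_zero.mpr hsub)
    have hinf : {p : Nat.Primes | ¬ ((p:ℕ) ∣ M)}.Infinite := by
      have hc := (dvd_set_finite M hM).infinite_compl
      convert hc using 1
      rfl
    have hsubset : {p : Nat.Primes | ¬ ((p:ℕ) ∣ M)} ⊆
        {p : Nat.Primes | iotaComp ℓ p a - iotaComp ℓ p b ≠ 0} := by
      intro p hp
      simp only [Set.mem_setOf_eq] at hp ⊢
      have hda : ¬ ((p:ℕ) ∣ a.den) := fun h => hp ((h.mul_right _).mul_right _)
      have hdb : ¬ ((p:ℕ) ∣ b.den) := fun h => hp ((h.mul_left _).mul_right _)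
      have hnum : ¬ ((p:ℕ) ∣ (a - b).num.natAbs) := fun h => hp (h.mul_left _)
      rw [← pt_sub ℓ p a b hda hdb]
      -- show iotaComp ℓ p (a - b) ≠ 0
      have hident : (((a - b).den : ℤ) : ℚ) * (a - b) = ((a - b).num : ℚ) := by
        push_cast
        linear_combination Rat.mul_den_eq_num (a - b)
      have hdenAbs : ¬ ((p:ℕ) ∣ (((a - b).den : ℤ)).natAbs) := by
        -- first get p ∤ (a-b).den
        have h1 : (a.den : ℚ) * a = a.num := by rw [mul_comm]; exact Rat.mul_den_eq_num a
        have h2 : (b.den : ℚ) * b = b.num := by rw [mul_comm]; exact Rat.mul_den_eq_num b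
        have hden := den_not_dvd p (a - b) (a.num * b.den - b.num * a.den) (a.den * b.den)
          (prod_not_dvd p a b hda hdb)
          (by push_cast; linear_combination (b.den : ℚ) * h1 - (a.den : ℚ) * h2)
        simpa using hden
      have k := key ℓ p (a - b) (a - b).num ((a - b).den : ℤ) hdenAbs hident
      rw [k]
      haveI : Fact (1 < (p:ℕ)^ℓ) := ⟨Nat.one_lt_pow hℓ.ne' p.2.one_lt⟩
      have hu1 : IsUnit (((a - b).num : ℤ) : ZMod ((p:ℕ)^ℓ)) := natAbs_unit ℓ p _ hnum
      have hu2 : IsUnit ((((a - b).den : ℤ)) : ZMod ((p:ℕ)^ℓ)) := natAbs_unit ℓ p _ hdenAbs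
      have e2 := ZMod.mul_inv_of_unit _ hu2
      have hu3 : IsUnit ((((a - b).den : ℤ)) : ZMod ((p:ℕ)^ℓ))⁻¹ :=
        IsUnit.of_mul_eq_one _ (by rw [mul_comm]; exact e2)
      exact (hu1.mul hu3).ne_zero
    exact (hinf.mono hsubset) hfin
end

section
/- Let p be an odd prime and let 𝐬 = ((s_1,ε_1),…,(s_d,ε_d)) be a signed composition, with reversal rev(𝐬) = ((s_d,ε_d),…,(s_1,ε_1)). Then H_{p−1}(rev(𝐬)) ≡ (−1)^{|𝐬|} · sgn(𝐬) · H_{p−1}(𝐬) (mod p) and H^⋆_{p−1}(rev(𝐬)) ≡ (−1)^{|𝐬|} · sgn(𝐬) · H^⋆_{p−1}(𝐬) (mod p). -/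
open scoped BigOperators

/-! ### Auxiliary machinery -/

namespace RevAux

/-- Sum over strictly decreasing chains `n ≥ k₁ > k₂ > ⋯ ≥ b`. -/
def dSum (b : ℕ) : ℕ → List (ℕ → ℚ) → ℚ
  | _, [] => 1
  | n, f :: t => ∑ k ∈ Finset.Icc b n, f k * dSum b (k - 1) t

/-- Sum over strictly increasing chains `m < k₁ < k₂ < ⋯ ≤ n`. -/
def uSum : ℕ → ℕ → List (ℕ → ℚ) → ℚ
  | _, _, [] => 1
  | m, n, f :: t => ∑ k ∈ Finset.Icc (m + 1) n, f k * uSum k n t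

/-- Sum over weakly decreasing chains `n ≥ k₁ ≥ ⋯ ≥ b`. -/
def dS (b : ℕ) : ℕ → List (ℕ → ℚ) → ℚ
  | _, [] => 1
  | n, f :: t => ∑ k ∈ Finset.Icc b n, f k * dS b k t

/-- Sum over weakly increasing chains `m ≤ k₁ ≤ ⋯ ≤ n`. -/
def uS : ℕ → ℕ → List (ℕ → ℚ) → ℚ
  | _, _, [] => 1
  | m, n, f :: t => ∑ k ∈ Finset.Icc m n, f k * uS k n t

def hTerm (x : ℕ × ℚ) : ℕ → ℚ := fun k => x.2 ^ k / (k : ℚ) ^ x.1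

def hTerm' (p : ℕ) (x : ℕ × ℚ) : ℕ → ℚ := fun k => x.2 ^ (p - k) / ((p - k : ℕ) : ℚ) ^ x.1

@[simp] lemma hTerm_apply (x : ℕ × ℚ) (k : ℕ) : hTerm x k = x.2 ^ k / (k : ℚ) ^ x.1 := rfl

@[simp] lemma hTerm'_apply (p : ℕ) (x : ℕ × ℚ) (k : ℕ) :
    hTerm' p x k = x.2 ^ (p - k) / ((p - k : ℕ) : ℚ) ^ x.1 := rfl

def csign (x : ℕ × ℚ) : ℚ := (-1) ^ x.1 * x.2

lemma AMHS_eq (l : List (ℕ × ℚ)) : ∀ n, AMHS n l = dSum 1 n (l.map hTerm) := by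
  induction l with
  | nil => intro n; rfl
  | cons x t ih =>
    intro n
    obtain ⟨s, ε⟩ := x
    simp only [AMHS, List.map_cons, dSum]
    exact Finset.sum_congr rfl fun k _ => by rw [ih, hTerm_apply]

lemma AMHSstar_eq (l : List (ℕ × ℚ)) : ∀ n, AMHSstar n l = dS 1 n (l.map hTerm) := by
  induction l with
  | nil => intro n; rfl
  | cons x t ih =>
    intro n
    obtain ⟨s, ε⟩ := x
    simp only [AMHSstar, List.map_cons, dS]
    exact Finset.sum_congr rfl fun k _ => by rw [ih, hTerm_apply]

lemma sum_swap_filter (s : Finset ℕ) (P : ℕ → ℕ → Prop) [∀ j k, Decidable (P j k)]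
    (F : ℕ → ℕ → ℚ) :
    ∑ j ∈ s, ∑ k ∈ s.filter (fun k => P j k), F j k
      = ∑ k ∈ s, ∑ j ∈ s.filter (fun j => P j k), F j k := by
  classical
  simp_rw [Finset.sum_filter]
  exact Finset.sum_comm

lemma dSum_append (b : ℕ) (hb : 1 ≤ b) (f : ℕ → ℚ) (l : List (ℕ → ℚ)) :
    ∀ n, dSum b n (l ++ [f]) = ∑ k ∈ Finset.Icc b n, dSum (k + 1) n l * f k := by
  classical
  induction l with
  | nil =>
    intro n
    simp only [List.nil_append, dSum]
    exact Finset.sum_congr rfl fun k _ => by rw [one_mul, mul_one]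
  | cons g t ih =>
    intro n
    simp only [List.cons_append, dSum]
    calc
      ∑ j ∈ Finset.Icc b n, g j * dSum b (j - 1) (t ++ [f])
          = ∑ j ∈ Finset.Icc b n, ∑ k ∈ Finset.Icc b (j - 1),
              g j * (dSum (k + 1) (j - 1) t * f k) := by
            refine Finset.sum_congr rfl fun j _ => ?_
            rw [ih, Finset.mul_sum]
      _ = ∑ j ∈ Finset.Icc b n, ∑ k ∈ (Finset.Icc b n).filter (fun k => k < j),
              g j * (dSum (k + 1) (j - 1) t * f k) := by
            refine Finset.sum_congr rfl fun j hj => ?_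
            obtain ⟨hj1, hj2⟩ := Finset.mem_Icc.mp hj
            congr 1
            ext k
            simp only [Finset.mem_Icc, Finset.mem_filter]
            omega
      _ = ∑ k ∈ Finset.Icc b n, ∑ j ∈ (Finset.Icc b n).filter (fun j => k < j),
              g j * (dSum (k + 1) (j - 1) t * f k) :=
            sum_swap_filter _ (fun j k => k < j) _
      _ = ∑ k ∈ Finset.Icc b n, ∑ j ∈ Finset.Icc (k + 1) n,
              g j * (dSum (k + 1) (j - 1) t * f k) := by
            refine Finset.sum_congr rfl fun k hk => ?_
            obtain ⟨hk1, hk2⟩ := Finset.mem_Icc.mp hk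
            congr 1
            ext j
            simp only [Finset.mem_Icc, Finset.mem_filter]
            omega
      _ = ∑ k ∈ Finset.Icc b n, dSum (k + 1) n (g :: t) * f k := by
            refine Finset.sum_congr rfl fun k hk => ?_
            simp only [dSum, Finset.sum_mul]
            exact Finset.sum_congr rfl fun j _ => by ring

lemma dS_append (b : ℕ) (f : ℕ → ℚ) (l : List (ℕ → ℚ)) :
    ∀ n, dS b n (l ++ [f]) = ∑ k ∈ Finset.Icc b n, dS k n l * f k := by
  classical
  induction l with
  | nil =>
    intro n
    simp only [List.nil_append, dS]
    exact Finset.sum_congr rfl fun k _ => by rw [one_mul, mul_one]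
  | cons g t ih =>
    intro n
    simp only [List.cons_append, dS]
    calc
      ∑ j ∈ Finset.Icc b n, g j * dS b j (t ++ [f])
          = ∑ j ∈ Finset.Icc b n, ∑ k ∈ Finset.Icc b j,
              g j * (dS k j t * f k) := by
            refine Finset.sum_congr rfl fun j _ => ?_
            rw [ih, Finset.mul_sum]
      _ = ∑ j ∈ Finset.Icc b n, ∑ k ∈ (Finset.Icc b n).filter (fun k => k ≤ j),
              g j * (dS k j t * f k) := by
            refine Finset.sum_congr rfl fun j hj => ?_
            obtain ⟨hj1, hj2⟩ := Finset.mem_Icc.mp hj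
            congr 1
            ext k
            simp only [Finset.mem_Icc, Finset.mem_filter]
            omega
      _ = ∑ k ∈ Finset.Icc b n, ∑ j ∈ (Finset.Icc b n).filter (fun j => k ≤ j),
              g j * (dS k j t * f k) :=
            sum_swap_filter _ (fun j k => k ≤ j) _
      _ = ∑ k ∈ Finset.Icc b n, ∑ j ∈ Finset.Icc k n,
              g j * (dS k j t * f k) := by
            refine Finset.sum_congr rfl fun k hk => ?_
            obtain ⟨hk1, hk2⟩ := Finset.mem_Icc.mp hk
            congr 1
            ext j
            simp only [Finset.mem_Icc, Finset.mem_filter]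
            omega
      _ = ∑ k ∈ Finset.Icc b n, dS k n (g :: t) * f k := by
            refine Finset.sum_congr rfl fun k hk => ?_
            simp only [dS, Finset.sum_mul]
            exact Finset.sum_congr rfl fun j _ => by ring

lemma dSum_reverse (n : ℕ) (l : List (ℕ → ℚ)) :
    ∀ m, dSum (m + 1) n l.reverse = uSum m n l := by
  induction l with
  | nil => intro m; rfl
  | cons f t ih =>
    intro m
    rw [List.reverse_cons, dSum_append (m + 1) (Nat.le_add_left 1 m) f t.reverse n]
    simp only [uSum]
    exact Finset.sum_congr rfl fun k _ => by rw [ih k, mul_comm]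

lemma dS_reverse (n : ℕ) (l : List (ℕ → ℚ)) :
    ∀ m, dS m n l.reverse = uS m n l := by
  induction l with
  | nil => intro m; rfl
  | cons f t ih =>
    intro m
    rw [List.reverse_cons, dS_append m f t.reverse n]
    simp only [uS]
    exact Finset.sum_congr rfl fun k _ => by rw [ih k, mul_comm]

lemma uSum_flip (p : ℕ) (l : List (ℕ → ℚ)) :
    ∀ m, m ≤ p - 1 →
      uSum m (p - 1) l = dSum 1 (p - 1 - m) (l.map (fun f k => f (p - k))) := by
  induction l with
  | nil => intro m _; rfl
  | cons f t ih =>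
    intro m hm
    simp only [uSum, List.map_cons, dSum]
    refine Finset.sum_nbij' (fun k => p - k) (fun k => p - k) ?_ ?_ ?_ ?_ ?_
    · intro a ha
      simp only [Finset.mem_Icc] at ha ⊢
      omega
    · intro a ha
      simp only [Finset.mem_Icc] at ha ⊢
      omega
    · intro a ha
      simp only [Finset.mem_Icc] at ha
      show p - (p - a) = a
      omega
    · intro a ha
      simp only [Finset.mem_Icc] at ha
      show p - (p - a) = a
      omega
    · intro a ha
      simp only [Finset.mem_Icc] at ha
      have h1 : p - (p - a) = a := by omega
      have h2 : p - a - 1 = p - 1 - a := by omega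
      rw [h1, h2, ih a (by omega)]

lemma uS_flip (p : ℕ) (l : List (ℕ → ℚ)) :
    ∀ m, 1 ≤ m → m ≤ p - 1 →
      uS m (p - 1) l = dS 1 (p - m) (l.map (fun f k => f (p - k))) := by
  induction l with
  | nil => intro m _ _; rfl
  | cons f t ih =>
    intro m hm1 hm
    simp only [uS, List.map_cons, dS]
    refine Finset.sum_nbij' (fun k => p - k) (fun k => p - k) ?_ ?_ ?_ ?_ ?_
    · intro a ha
      simp only [Finset.mem_Icc] at ha ⊢
      omega
    · intro a ha
      simp only [Finset.mem_Icc] at ha ⊢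
      omega
    · intro a ha
      simp only [Finset.mem_Icc] at ha
      show p - (p - a) = a
      omega
    · intro a ha
      simp only [Finset.mem_Icc] at ha
      show p - (p - a) = a
      omega
    · intro a ha
      simp only [Finset.mem_Icc] at ha
      have h1 : p - (p - a) = a := by omega
      rw [h1, ih a (by omega) (by omega)]

/-! ### `p`-adic norm estimates -/

lemma padicNorm_pow (p : ℕ) [Fact p.Prime] (q : ℚ) (n : ℕ) :
    padicNorm p (q ^ n) = padicNorm p q ^ n := by
  induction n with
  | zero => simp [padicNorm.one]
  | succ n ih => rw [pow_succ, pow_succ, padicNorm.mul, ih]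

lemma padicNorm_pm (p : ℕ) [Fact p.Prime] {x : ℚ} (hx : x = 1 ∨ x = -1) :
    padicNorm p x = 1 := by
  rcases hx with rfl | rfl
  · exact padicNorm.one
  · rw [show (-1 : ℚ) = -(1 : ℚ) by ring, padicNorm.neg]
    exact padicNorm.one

lemma padicNorm_sign_pow (p : ℕ) [Fact p.Prime] {ε : ℚ} (hε : ε = 1 ∨ ε = -1) (k : ℕ) :
    padicNorm p (ε ^ k) = 1 := by
  rw [padicNorm_pow, padicNorm_pm p hε, one_pow]

lemma padicNorm_nat_unit (p : ℕ) [Fact p.Prime] {k : ℕ} (hk1 : 1 ≤ k) (hk2 : k ≤ p - 1) :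
    padicNorm p (k : ℚ) = 1 := by
  rw [padicNorm.nat_eq_one_iff]
  intro hdvd
  have h2 : 2 ≤ p := (Fact.out : p.Prime).two_le
  have := Nat.le_of_dvd (by omega) hdvd
  omega

lemma norm_term (p : ℕ) [Fact p.Prime] {ε : ℚ} (hε : ε = 1 ∨ ε = -1) (s k : ℕ)
    (hk1 : 1 ≤ k) (hk2 : k ≤ p - 1) :
    padicNorm p (ε ^ k / (k : ℚ) ^ s) = 1 := by
  rw [padicNorm.div, padicNorm_sign_pow p hε, padicNorm_pow,
    padicNorm_nat_unit p hk1 hk2, one_pow, div_one]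

lemma sign_flip (p : ℕ) (hodd : Odd p) {ε : ℚ} (hε : ε = 1 ∨ ε = -1) {k : ℕ}
    (hk : k ≤ p) : ε * ε ^ k = ε ^ (p - k) := by
  rcases hε with rfl | rfl
  · simp
  · have h1 : (-1 : ℚ) ^ (p - k) * (-1 : ℚ) ^ k = -1 := by
      rw [← pow_add, show p - k + k = p by omega]
      exact Odd.neg_one_pow hodd
    have h2 : (-1 : ℚ) ^ k * (-1 : ℚ) ^ k = 1 := by
      rw [← pow_add]
      exact Even.neg_one_pow ⟨k, rfl⟩
    have h3 : (-1 : ℚ) ^ (p - k) * ((-1 : ℚ) ^ k * (-1 : ℚ) ^ k) = -1 * (-1 : ℚ) ^ k := by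
      rw [← mul_assoc, h1]
    rw [h2, mul_one] at h3
    rw [h3]

lemma norm_term_diff (p : ℕ) [Fact p.Prime] (hodd : Odd p) {ε : ℚ} (hε : ε = 1 ∨ ε = -1)
    (s k : ℕ) (hk1 : 1 ≤ k) (hk2 : k ≤ p - 1) :
    padicNorm p (ε ^ (p - k) / ((p - k : ℕ) : ℚ) ^ s
      - ((-1 : ℚ) ^ s * ε) * (ε ^ k / (k : ℚ) ^ s)) ≤ (p : ℚ)⁻¹ := by
  have h2 : 2 ≤ p := (Fact.out : p.Prime).two_le
  set a : ℕ := p - k with ha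
  have ha1 : 1 ≤ a := by omega
  have ha2 : a ≤ p - 1 := by omega
  have hak : a + k = p := by omega
  have hka : (k : ℚ) ≠ 0 := Nat.cast_ne_zero.mpr (by omega)
  have haa : (a : ℚ) ≠ 0 := Nat.cast_ne_zero.mpr (by omega)
  have hek : ε * ε ^ k = ε ^ a := sign_flip p hodd hε (by omega)
  have hrw : ε ^ a / (a : ℚ) ^ s - ((-1 : ℚ) ^ s * ε) * (ε ^ k / (k : ℚ) ^ s)
      = ε ^ a * ((1 : ℚ) / (a : ℚ) ^ s - (-1 : ℚ) ^ s / (k : ℚ) ^ s) := by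
    rw [show ((-1 : ℚ) ^ s * ε) * (ε ^ k / (k : ℚ) ^ s)
        = (-1 : ℚ) ^ s * (ε * ε ^ k) / (k : ℚ) ^ s by ring, hek]
    ring
  rw [hrw, padicNorm.mul, padicNorm_sign_pow p hε, one_mul]
  -- rewrite the bracket as an integer over a unit denominator
  have hX : (1 : ℚ) / (a : ℚ) ^ s - (-1 : ℚ) ^ s / (k : ℚ) ^ s
      = (((k : ℤ) ^ s - (-1) ^ s * (a : ℤ) ^ s : ℤ) : ℚ) / ((a : ℚ) ^ s * (k : ℚ) ^ s) := by
    push_cast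
    field_simp
  set m : ℤ := (k : ℤ) ^ s - (-1) ^ s * (a : ℤ) ^ s with hm
  have hmod : (a : ℤ) ≡ -(k : ℤ) [ZMOD (p : ℤ)] := by
    have hd : ((p : ℤ)) ∣ ((a : ℤ) - -(k : ℤ)) := ⟨1, by push_cast [← hak]; ring⟩
    exact (Int.modEq_iff_dvd.mpr hd).symm
  have hdvd : (p : ℤ) ∣ m := by
    have hpow : (a : ℤ) ^ s ≡ (-(k : ℤ)) ^ s [ZMOD (p : ℤ)] := hmod.pow s
    have h3 : m ≡ (k : ℤ) ^ s - (-1) ^ s * (-(k : ℤ)) ^ s [ZMOD (p : ℤ)] :=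
      (Int.ModEq.refl _).sub (hpow.mul_left _)
    have h4 : (k : ℤ) ^ s - (-1) ^ s * (-(k : ℤ)) ^ s = 0 := by
      rw [← mul_pow]
      ring_nf
    rw [h4] at h3
    exact (Int.modEq_zero_iff_dvd).mp h3
  obtain ⟨c, hc⟩ := hdvd
  rw [hX, padicNorm.div, hc]
  have hnum : padicNorm p (((p : ℤ) * c : ℤ) : ℚ) ≤ (p : ℚ)⁻¹ := by
    push_cast
    rw [padicNorm.mul]
    have hp1 : 1 < p := by omega
    rw [padicNorm.padicNorm_p hp1]
    exact mul_le_of_le_one_right (inv_nonneg.mpr (by positivity)) (padicNorm.of_int c)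
  have hden : padicNorm p ((a : ℚ) ^ s * (k : ℚ) ^ s) = 1 := by
    rw [padicNorm.mul, padicNorm_pow, padicNorm_pow,
      padicNorm_nat_unit p ha1 ha2, padicNorm_nat_unit p hk1 hk2]
    norm_num
  rw [hden, div_one]
  exact hnum

lemma csign_prod_pm (l : List (ℕ × ℚ)) (h : IsSignedComp l) :
    (l.map csign).prod = 1 ∨ (l.map csign).prod = -1 := by
  induction l with
  | nil => left; rfl
  | cons x t ih =>
    have hx := (h x List.mem_cons_self).2
    have ht := ih fun y hy => h y (List.mem_cons_of_mem _ hy)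
    rw [List.map_cons, List.prod_cons]
    have hcx : csign x = 1 ∨ csign x = -1 := by
      unfold csign
      rcases Nat.even_or_odd x.1 with he | ho
      · rw [he.neg_one_pow]
        rcases hx with h1 | h1 <;> simp [h1]
      · rw [ho.neg_one_pow]
        rcases hx with h1 | h1 <;> simp [h1]
    rcases hcx with h1 | h1 <;> rcases ht with h2 | h2 <;> simp [h1, h2]

lemma csign_prod_eq (l : List (ℕ × ℚ)) :
    (l.map csign).prod = (-1 : ℚ) ^ ((l.map Prod.fst).sum) * (l.map Prod.snd).prod := by
  induction l with
  | nil => simp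
  | cons x t ih =>
    simp only [List.map_cons, List.prod_cons, List.sum_cons, ih, csign, pow_add]
    ring

/-- The key congruence, strict-inequality version. -/
lemma key (p : ℕ) [Fact p.Prime] (hodd : Odd p) (l : List (ℕ × ℚ)) (hl : IsSignedComp l) :
    ∀ n, n ≤ p - 1 →
      padicNorm p (dSum 1 n (l.map hTerm)) ≤ 1 ∧
      padicNorm p (dSum 1 n (l.map (hTerm' p))
        - (l.map csign).prod * dSum 1 n (l.map hTerm)) ≤ (p : ℚ)⁻¹ := by
  have h2 : 2 ≤ p := (Fact.out : p.Prime).two_le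
  have hpinv : (0 : ℚ) ≤ (p : ℚ)⁻¹ := inv_nonneg.mpr (by positivity)
  induction l with
  | nil =>
    intro n _
    constructor
    · simpa [dSum] using le_of_eq (padicNorm.one (p := p))
    · simpa [dSum] using hpinv
  | cons x t ih =>
    intro n hn
    have hx := hl x List.mem_cons_self
    have hxs := hx.2
    have hlt : IsSignedComp t := fun y hy => hl y (List.mem_cons_of_mem _ hy)
    have iht := ih hlt
    obtain ⟨s, ε⟩ := x
    have hε : ε = 1 ∨ ε = -1 := hxs
    have hTnorm : padicNorm p ((t.map csign).prod) = 1 :=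
      padicNorm_pm p (csign_prod_pm t hlt)
    constructor
    · simp only [List.map_cons, dSum]
      refine padicNorm.sum_le' (fun k hk => ?_) zero_le_one
      obtain ⟨hk1, hk2⟩ := Finset.mem_Icc.mp hk
      rw [padicNorm.mul, hTerm_apply]
      have h1 : padicNorm p (ε ^ k / (k : ℚ) ^ s) = 1 :=
        norm_term p hε s k hk1 (by omega)
      have h2' := (iht (k - 1) (by omega)).1
      calc padicNorm p (ε ^ k / (k : ℚ) ^ s) * padicNorm p (dSum 1 (k - 1) (t.map hTerm))
          ≤ 1 * 1 := mul_le_mul (le_of_eq h1) h2' (padicNorm.nonneg _) zero_le_one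
        _ = 1 := by ring
    · simp only [List.map_cons, dSum, List.prod_cons]
      rw [Finset.mul_sum, ← Finset.sum_sub_distrib]
      refine padicNorm.sum_le' (fun k hk => ?_) hpinv
      obtain ⟨hk1, hk2⟩ := Finset.mem_Icc.mp hk
      have hk2' : k ≤ p - 1 := by omega
      have expand : hTerm' p (s, ε) k * dSum 1 (k - 1) (t.map (hTerm' p))
          - csign (s, ε) * (t.map csign).prod * (hTerm (s, ε) k * dSum 1 (k - 1) (t.map hTerm))
          = hTerm' p (s, ε) k * (dSum 1 (k - 1) (t.map (hTerm' p))
              - (t.map csign).prod * dSum 1 (k - 1) (t.map hTerm))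
            + (hTerm' p (s, ε) k - csign (s, ε) * hTerm (s, ε) k)
              * ((t.map csign).prod * dSum 1 (k - 1) (t.map hTerm)) := by
        ring
      rw [expand]
      refine le_trans padicNorm.nonarchimedean (max_le ?_ ?_)
      · rw [padicNorm.mul]
        have h1 : padicNorm p (hTerm' p (s, ε) k) = 1 := by
          rw [hTerm'_apply]
          exact norm_term p hε s (p - k) (by omega) (by omega)
        have h2' := (iht (k - 1) (by omega)).2
        calc padicNorm p (hTerm' p (s, ε) k)
              * padicNorm p (dSum 1 (k - 1) (t.map (hTerm' p))
                - (t.map csign).prod * dSum 1 (k - 1) (t.map hTerm))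
            ≤ 1 * (p : ℚ)⁻¹ := mul_le_mul (le_of_eq h1) h2' (padicNorm.nonneg _) zero_le_one
          _ = (p : ℚ)⁻¹ := by ring
      · rw [padicNorm.mul]
        have h1 : padicNorm p (hTerm' p (s, ε) k - csign (s, ε) * hTerm (s, ε) k)
            ≤ (p : ℚ)⁻¹ := by
          simpa [csign] using norm_term_diff p hodd hε s k hk1 hk2'
        have h2' : padicNorm p ((t.map csign).prod * dSum 1 (k - 1) (t.map hTerm)) ≤ 1 := by
          rw [padicNorm.mul, hTnorm, one_mul]
          exact (iht (k - 1) (by omega)).1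
        calc padicNorm p (hTerm' p (s, ε) k - csign (s, ε) * hTerm (s, ε) k)
              * padicNorm p ((t.map csign).prod * dSum 1 (k - 1) (t.map hTerm))
            ≤ (p : ℚ)⁻¹ * 1 := mul_le_mul h1 h2' (padicNorm.nonneg _) hpinv
          _ = (p : ℚ)⁻¹ := by ring

/-- The key congruence, star version. -/
lemma keyStar (p : ℕ) [Fact p.Prime] (hodd : Odd p) (l : List (ℕ × ℚ)) (hl : IsSignedComp l) :
    ∀ n, n ≤ p - 1 →
      padicNorm p (dS 1 n (l.map hTerm)) ≤ 1 ∧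
      padicNorm p (dS 1 n (l.map (hTerm' p))
        - (l.map csign).prod * dS 1 n (l.map hTerm)) ≤ (p : ℚ)⁻¹ := by
  have h2 : 2 ≤ p := (Fact.out : p.Prime).two_le
  have hpinv : (0 : ℚ) ≤ (p : ℚ)⁻¹ := inv_nonneg.mpr (by positivity)
  induction l with
  | nil =>
    intro n _
    constructor
    · simpa [dS] using le_of_eq (padicNorm.one (p := p))
    · simpa [dS] using hpinv
  | cons x t ih =>
    intro n hn
    have hx := hl x List.mem_cons_self
    have hxs := hx.2
    have hlt : IsSignedComp t := fun y hy => hl y (List.mem_cons_of_mem _ hy)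
    have iht := ih hlt
    obtain ⟨s, ε⟩ := x
    have hε : ε = 1 ∨ ε = -1 := hxs
    have hTnorm : padicNorm p ((t.map csign).prod) = 1 :=
      padicNorm_pm p (csign_prod_pm t hlt)
    constructor
    · simp only [List.map_cons, dS]
      refine padicNorm.sum_le' (fun k hk => ?_) zero_le_one
      obtain ⟨hk1, hk2⟩ := Finset.mem_Icc.mp hk
      rw [padicNorm.mul, hTerm_apply]
      have h1 : padicNorm p (ε ^ k / (k : ℚ) ^ s) = 1 :=
        norm_term p hε s k hk1 (by omega)
      have h2' := (iht k (by omega)).1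
      calc padicNorm p (ε ^ k / (k : ℚ) ^ s) * padicNorm p (dS 1 k (t.map hTerm))
          ≤ 1 * 1 := mul_le_mul (le_of_eq h1) h2' (padicNorm.nonneg _) zero_le_one
        _ = 1 := by ring
    · simp only [List.map_cons, dS, List.prod_cons]
      rw [Finset.mul_sum, ← Finset.sum_sub_distrib]
      refine padicNorm.sum_le' (fun k hk => ?_) hpinv
      obtain ⟨hk1, hk2⟩ := Finset.mem_Icc.mp hk
      have hk2' : k ≤ p - 1 := by omega
      have expand : hTerm' p (s, ε) k * dS 1 k (t.map (hTerm' p))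
          - csign (s, ε) * (t.map csign).prod * (hTerm (s, ε) k * dS 1 k (t.map hTerm))
          = hTerm' p (s, ε) k * (dS 1 k (t.map (hTerm' p))
              - (t.map csign).prod * dS 1 k (t.map hTerm))
            + (hTerm' p (s, ε) k - csign (s, ε) * hTerm (s, ε) k)
              * ((t.map csign).prod * dS 1 k (t.map hTerm)) := by
        ring
      rw [expand]
      refine le_trans padicNorm.nonarchimedean (max_le ?_ ?_)
      · rw [padicNorm.mul]
        have h1 : padicNorm p (hTerm' p (s, ε) k) = 1 := by
          rw [hTerm'_apply]
          exact norm_term p hε s (p - k) (by omega) (by omega)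
        have h2' := (iht k (by omega)).2
        calc padicNorm p (hTerm' p (s, ε) k)
              * padicNorm p (dS 1 k (t.map (hTerm' p))
                - (t.map csign).prod * dS 1 k (t.map hTerm))
            ≤ 1 * (p : ℚ)⁻¹ := mul_le_mul (le_of_eq h1) h2' (padicNorm.nonneg _) zero_le_one
          _ = (p : ℚ)⁻¹ := by ring
      · rw [padicNorm.mul]
        have h1 : padicNorm p (hTerm' p (s, ε) k - csign (s, ε) * hTerm (s, ε) k)
            ≤ (p : ℚ)⁻¹ := by
          simpa [csign] using norm_term_diff p hodd hε s k hk1 hk2'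
        have h2' : padicNorm p ((t.map csign).prod * dS 1 k (t.map hTerm)) ≤ 1 := by
          rw [padicNorm.mul, hTnorm, one_mul]
          exact (iht k (by omega)).1
        calc padicNorm p (hTerm' p (s, ε) k - csign (s, ε) * hTerm (s, ε) k)
              * padicNorm p ((t.map csign).prod * dS 1 k (t.map hTerm))
            ≤ (p : ℚ)⁻¹ * 1 := mul_le_mul h1 h2' (padicNorm.nonneg _) hpinv
          _ = (p : ℚ)⁻¹ := by ring

lemma ratModEq_of_norm_le (p : ℕ) [Fact p.Prime] {a b : ℚ}
    (h : padicNorm p (a - b) ≤ (p : ℚ)⁻¹) : RatModEq p 1 a b := by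
  rcases eq_or_ne a b with he | hne
  · exact Or.inl he
  · right
    have hq : a - b ≠ 0 := sub_ne_zero.mpr hne
    rw [padicNorm.eq_zpow_of_nonzero hq, ← zpow_neg_one] at h
    have hp1 : (1 : ℚ) < p := by
      have := (Fact.out : p.Prime).one_lt
      exact_mod_cast this
    have hle := (zpow_le_zpow_iff_right₀ hp1).mp h
    have : (1 : ℤ) ≤ padicValRat p (a - b) := by omega
    simpa using this

end RevAux

open RevAux in
/-- Theorem `thm:reversal`: reversal relations mod `p`.
For an odd prime `p` and a signed composition `𝐬`:
`H_{p-1}(rev 𝐬) ≡ (-1)^{|𝐬|} sgn(𝐬) H_{p-1}(𝐬) (mod p)` and likewise for `H⋆`. -/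
theorem reversal_mod_p (p : ℕ) (hp : p.Prime) (hodd : Odd p)
    (s : List (ℕ × ℚ)) (hs : IsSignedComp s) :
    RatModEq p 1 (AMHS (p - 1) s.reverse)
      ((-1 : ℚ) ^ ((s.map Prod.fst).sum) * (s.map Prod.snd).prod * AMHS (p - 1) s) ∧
    RatModEq p 1 (AMHSstar (p - 1) s.reverse)
      ((-1 : ℚ) ^ ((s.map Prod.fst).sum) * (s.map Prod.snd).prod * AMHSstar (p - 1) s) := by
  haveI : Fact p.Prime := ⟨hp⟩
  have h2 : 2 ≤ p := hp.two_le
  have h3 : 3 ≤ p := by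
    rcases hodd with ⟨k, hk⟩
    omega
  have hflip : ∀ x : ℕ × ℚ, (fun k => hTerm x (p - k)) = hTerm' p x := fun x => rfl
  have hmapflip : (s.map hTerm).map (fun f k => f (p - k)) = s.map (hTerm' p) := by
    rw [List.map_map]
    exact List.map_congr_left fun x _ => hflip x
  constructor
  · -- strict version
    have e1 : AMHS (p - 1) s.reverse = dSum 1 (p - 1) (s.map (hTerm' p)) := by
      rw [AMHS_eq, List.map_reverse, show (1 : ℕ) = 0 + 1 from rfl,
        dSum_reverse (p - 1) (s.map hTerm) 0,
        uSum_flip p (s.map hTerm) 0 (Nat.zero_le _), Nat.sub_zero, hmapflip]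
    have hkey := (key p hodd s hs (p - 1) le_rfl).2
    rw [← e1, ← AMHS_eq, csign_prod_eq] at hkey
    exact ratModEq_of_norm_le p hkey
  · -- star version
    have e1 : AMHSstar (p - 1) s.reverse = dS 1 (p - 1) (s.map (hTerm' p)) := by
      rw [AMHSstar_eq, List.map_reverse, dS_reverse (p - 1) (s.map hTerm) 1,
        uS_flip p (s.map hTerm) 1 le_rfl (by omega),
        show p - 1 = p - 1 from rfl, hmapflip]
    have hkey := (keyStar p hodd s hs (p - 1) le_rfl).2
    rw [← e1, ← AMHSstar_eq, csign_prod_eq] at hkey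
    exact ratModEq_of_norm_le p hkey
end

section
/- Let p be an odd prime and let 𝐬 = ((s_1,ε_1),…,(s_d,ε_d)) be a signed composition, with reversal rev(𝐬) = ((s_d,ε_d),…,(s_1,ε_1)). For 1 ≤ i ≤ d let 𝐬⊕e_i be the signed composition obtained from 𝐬 by replacing (s_i,ε_i) with (s_i+1,ε_i). Then (−1)^{|𝐬|} sgn(𝐬) H_{p−1}(rev(𝐬)) ≡ H_{p−1}(𝐬) + p·Σ_{i=1}^d s_i·H_{p−1}(𝐬⊕e_i) (mod p²), and (−1)^{|𝐬|} sgn(𝐬) H^⋆_{p−1}(rev(𝐬)) ≡ H^⋆_{p−1}(𝐬) + p·Σ_{i=1}^d s_i·H^⋆_{p−1}(𝐬⊕e_i) (mod p²). -/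
open scoped BigOperators

namespace Rev

/-- generalized descending sum, lower bound `m`, gap `δ` (1 = strict, 0 = weak). -/
def Dg (δ : ℕ) : ℕ → ℕ → List (ℕ × ℚ) → ℚ
  | _, _, [] => 1
  | n, m, (s, ε) :: t => ∑ k ∈ Finset.Icc m n, ε ^ k / (k : ℚ) ^ s * Dg δ (k - δ) m t

/-- generalized ascending sum, bounds `[m, n]`. -/
def Eg (δ : ℕ) : ℕ → ℕ → List (ℕ × ℚ) → ℚ
  | _, _, [] => 1
  | m, n, (s, ε) :: t => ∑ k ∈ Finset.Icc m n, ε ^ k / (k : ℚ) ^ s * Eg δ (k + δ) n t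

/-- descending sum with reflected factors `ε^(p-k)/(p-k)^s`. -/
def Fg (p δ : ℕ) : ℕ → ℕ → List (ℕ × ℚ) → ℚ
  | _, _, [] => 1
  | n, m, (s, ε) :: t =>
      ∑ k ∈ Finset.Icc m n, ε ^ (p - k) / ((p - k : ℕ) : ℚ) ^ s * Fg p δ (k - δ) m t

lemma AMHS_eq : ∀ (l : List (ℕ × ℚ)) (n : ℕ), AMHS n l = Dg 1 n 1 l
  | [], n => rfl
  | (s, ε) :: t, n => by
      rw [AMHS, Dg]
      exact Finset.sum_congr rfl fun k _ => by rw [AMHS_eq t]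

lemma AMHSstar_eq : ∀ (l : List (ℕ × ℚ)) (n : ℕ), AMHSstar n l = Dg 0 n 1 l
  | [], n => rfl
  | (s, ε) :: t, n => by
      rw [AMHSstar, Dg]
      exact Finset.sum_congr rfl fun k _ => by rw [AMHSstar_eq t, Nat.sub_zero]

lemma Dg_snoc (δ : ℕ) (hδ : δ ≤ 1) :
    ∀ (u : List (ℕ × ℚ)) (s : ℕ) (ε : ℚ) (n m : ℕ), 1 ≤ m →
      Dg δ n m (u ++ [(s, ε)]) =
        ∑ k ∈ Finset.Icc m n, ε ^ k / (k : ℚ) ^ s * Dg δ n (k + δ) u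
  | [], s, ε, n, m, hm => by
      rw [List.nil_append, Dg]
      exact Finset.sum_congr rfl fun k _ => by rw [Dg, Dg]
  | (s', ε') :: u', s, ε, n, m, hm => by
      rw [List.cons_append, Dg]
      have h1 : ∀ j ∈ Finset.Icc m n,
          ε' ^ j / (j : ℚ) ^ s' * Dg δ (j - δ) m (u' ++ [(s, ε)]) =
          ∑ k ∈ Finset.Icc m (j - δ),
            ε ^ k / (k : ℚ) ^ s * (ε' ^ j / (j : ℚ) ^ s' * Dg δ (j - δ) (k + δ) u') := by
        intro j _
        rw [Dg_snoc δ hδ u' s ε (j - δ) m hm, Finset.mul_sum]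
        exact Finset.sum_congr rfl fun k _ => by ring
      rw [Finset.sum_congr rfl h1]
      rw [Finset.sum_comm' (t' := Finset.Icc m n)
        (s' := fun k => Finset.Icc (k + δ) n) (by
          intro j k
          simp only [Finset.mem_Icc]
          omega)]
      refine Finset.sum_congr rfl fun k hk => ?_
      rw [Dg, Finset.mul_sum]

lemma Dg_reverse (δ : ℕ) (hδ : δ ≤ 1) :
    ∀ (l : List (ℕ × ℚ)) (n m : ℕ), 1 ≤ m → Dg δ n m l.reverse = Eg δ m n l
  | [], n, m, hm => rfl
  | (s, ε) :: t, n, m, hm => by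
      rw [List.reverse_cons, Dg_snoc δ hδ t.reverse s ε n m hm, Eg]
      exact Finset.sum_congr rfl fun k hk => by
        rw [Dg_reverse δ hδ t n (k + δ) (by
          have := (Finset.mem_Icc.mp hk).1; omega)]

lemma Eg_eq_Fg (p δ : ℕ) (hδ : δ ≤ 1) (hp : 1 ≤ p) :
    ∀ (l : List (ℕ × ℚ)) (m n : ℕ), 1 ≤ m → n ≤ p - 1 →
      Eg δ m n l = Fg p δ (p - m) (p - n) l
  | [], m, n, hm, hn => rfl
  | (s, ε) :: t, m, n, hm, hn => by
      rw [Eg, Fg]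
      refine Finset.sum_nbij' (fun k => p - k) (fun k => p - k) ?_ ?_ ?_ ?_ ?_
      · intro k hk; simp only [Finset.mem_Icc] at *; omega
      · intro k hk; simp only [Finset.mem_Icc] at *; omega
      · intro k hk; simp only [Finset.mem_Icc] at hk; show p - (p - k) = k; omega
      · intro k hk; simp only [Finset.mem_Icc] at hk; show p - (p - k) = k; omega
      · intro k hk
        simp only [Finset.mem_Icc] at hk
        have h1 : p - (p - k) = k := by omega
        have h2 : p - k - δ = p - (k + δ) := by omega
        rw [h1, h2, Eg_eq_Fg p δ hδ hp t (k + δ) n (by omega) hn]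

lemma rev_chain (p δ : ℕ) (hδ : δ ≤ 1) (hp : 1 ≤ p) (l : List (ℕ × ℚ)) :
    Dg δ (p - 1) 1 l.reverse = Fg p δ (p - 1) 1 l := by
  rw [Dg_reverse δ hδ l (p - 1) 1 le_rfl,
    Eg_eq_Fg p δ hδ hp l 1 (p - 1) le_rfl le_rfl]
  congr 1
  omega

/-- the sign factor. -/
def Cl (l : List (ℕ × ℚ)) : ℚ := (l.map fun x => (-1 : ℚ) ^ x.1 * x.2).prod

lemma sign_eq (l : List (ℕ × ℚ)) :
    (-1 : ℚ) ^ ((l.map Prod.fst).sum) * (l.map Prod.snd).prod = Cl l := by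
  induction l with
  | nil => simp [Cl]
  | cons a t ih =>
      simp only [Cl, List.map_cons, List.sum_cons, List.prod_cons] at *
      rw [pow_add, ← ih]
      ring


lemma Cl_cons (s : ℕ) (ε : ℚ) (t : List (ℕ × ℚ)) :
    Cl ((s, ε) :: t) = ((-1 : ℚ) ^ s * ε) * Cl t := by
  simp [Cl]

def Rhs (q δ n : ℕ) (l : List (ℕ × ℚ)) : ℚ :=
  Dg δ n 1 l + q * ∑ i : Fin l.length,
    ((l.get i).1 : ℚ) * Dg δ n 1 (l.set i ((l.get i).1 + 1, (l.get i).2))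

section Padic
variable {p : ℕ} [hp : Fact p.Prime]

lemma norm_natCast_le (n : ℕ) : ‖((n : ℚ_[p]))‖ ≤ 1 := by
  have := Padic.norm_int_le_one (p := p) (n : ℤ)
  push_cast at this
  exact this

lemma norm_unit {k : ℕ} (h1 : 1 ≤ k) (h2 : k ≤ p - 1) : ‖((k : ℚ_[p]))‖ = 1 := by
  refine le_antisymm (norm_natCast_le k) ?_
  by_contra h
  push_neg at h
  have hlt : ‖(((k : ℤ)) : ℚ_[p])‖ < 1 := by push_cast; exact h
  have hdvd : (p : ℤ) ∣ (k : ℤ) := (Padic.norm_intCast_lt_one_iff (p := p) (k := k)).mp hlt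
  have hpk : p ∣ k := by exact_mod_cast hdvd
  have h3 := Nat.le_of_dvd (by omega) hpk
  have h4 := hp.out.two_le
  omega

lemma norm_eps {ε : ℚ} (hε : ε = 1 ∨ ε = -1) (k : ℕ) : ‖((ε : ℚ_[p])) ^ k‖ = 1 := by
  rcases hε with h | h <;> subst h <;> simp

lemma norm_add_le_one {a b : ℚ_[p]} (ha : ‖a‖ ≤ 1) (hb : ‖b‖ ≤ 1) : ‖a + b‖ ≤ 1 :=
  le_trans (Padic.nonarchimedean a b) (max_le ha hb)

lemma norm_mul_le_one {a b : ℚ_[p]} (ha : ‖a‖ ≤ 1) (hb : ‖b‖ ≤ 1) : ‖a * b‖ ≤ 1 := by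
  rw [norm_mul]
  calc ‖a‖ * ‖b‖ ≤ 1 * 1 := mul_le_mul ha hb (norm_nonneg b) zero_le_one
  _ = 1 := by ring

lemma norm_sum_le_one {α : Type*} {S : Finset α} {f : α → ℚ_[p]} (h : ∀ k ∈ S, ‖f k‖ ≤ 1) :
    ‖∑ k ∈ S, f k‖ ≤ 1 :=
  Finset.sum_induction f (fun x => ‖x‖ ≤ 1) (fun _ _ => norm_add_le_one) (by simp) h

lemma norm_sub_p {a : ℚ_[p]} (ha : ‖a‖ = 1) : ‖a - (p : ℚ_[p])‖ = 1 := by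
  have hplt : ‖((p : ℚ_[p]))‖ < 1 := by
    rw [Padic.norm_p, inv_lt_one_iff₀]
    right
    exact_mod_cast hp.out.one_lt
  have harr : ‖a - (p:ℚ_[p])‖ ≤ max ‖a‖ ‖-(p:ℚ_[p])‖ := by
    rw [sub_eq_add_neg]; exact Padic.nonarchimedean a (-(p:ℚ_[p]))
  refine le_antisymm ?_ ?_
  · refine le_trans harr ?_
    rw [norm_neg, ha]
    exact max_le le_rfl hplt.le
  · by_contra h
    push_neg at h
    have h2 : ‖a‖ < 1 := by
      have e : a = (a - (p:ℚ_[p])) + (p:ℚ_[p]) := by ring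
      calc ‖a‖ = ‖(a - (p:ℚ_[p])) + (p:ℚ_[p])‖ := by rw [← e]
      _ ≤ max ‖a - (p:ℚ_[p])‖ ‖(p:ℚ_[p])‖ := Padic.nonarchimedean _ _
      _ < 1 := max_lt h hplt
    rw [ha] at h2
    exact lt_irrefl _ h2

lemma pow_sub_lemma (a : ℚ_[p]) (ha : ‖a‖ ≤ 1) : ∀ n : ℕ, ∃ c : ℚ_[p],
    (a - p) ^ n = a ^ n - p * c ∧ ‖c‖ ≤ 1
  | 0 => ⟨0, by ring, by simp⟩
  | n + 1 => by
      obtain ⟨c, hc, hcn⟩ := pow_sub_lemma a ha n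
      refine ⟨a ^ n + c * a - p * c, by rw [pow_succ, hc]; ring, ?_⟩
      have h1 : ‖a ^ n‖ ≤ 1 := by rw [norm_pow]; exact pow_le_one₀ (norm_nonneg a) ha
      have h2 : ‖-(↑p * c)‖ ≤ 1 := by
        rw [norm_neg]; exact norm_mul_le_one (norm_natCast_le p) hcn
      have : a ^ n + c * a - ↑p * c = a ^ n + c * a + -(↑p * c) := by ring
      rw [this]
      exact norm_add_le_one (norm_add_le_one h1 (norm_mul_le_one hcn ha)) h2

lemma key_poly (a : ℚ_[p]) (ha : ‖a‖ ≤ 1) : ∀ s : ℕ, ∃ b : ℚ_[p],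
    (a + s * p) * (a - p) ^ s = a ^ (s + 1) + p ^ 2 * b ∧ ‖b‖ ≤ 1
  | 0 => ⟨0, by push_cast; ring, by simp⟩
  | s + 1 => by
      obtain ⟨b, hb, hbn⟩ := key_poly a ha s
      obtain ⟨c, hc, hcn⟩ := pow_sub_lemma a ha (s + 1)
      refine ⟨b * (a - p) - c, ?_, ?_⟩
      · push_cast
        linear_combination (a - ↑p) * hb + (↑p) * hc
      · have h1 : ‖a - (p:ℚ_[p])‖ ≤ 1 := by
          have : a - (p:ℚ_[p]) = a + -(p:ℚ_[p]) := by ring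
          rw [this]
          exact norm_add_le_one ha (by rw [norm_neg]; exact norm_natCast_le p)
        have : b * (a - ↑p) - c = b * (a - ↑p) + -c := by ring
        rw [this]
        exact norm_add_le_one (norm_mul_le_one hbn h1) (by rw [norm_neg]; exact hcn)

lemma inv_expand {k : ℕ} (s : ℕ) (h1 : 1 ≤ k) (h2 : k ≤ p - 1) : ∃ σ : ℚ_[p], ‖σ‖ ≤ 1 ∧
    (-1 : ℚ_[p]) ^ s / ((p - k : ℕ) : ℚ_[p]) ^ s
      = 1 / (k : ℚ_[p]) ^ s + p * ((s : ℚ_[p]) / (k : ℚ_[p]) ^ (s + 1)) + (p:ℚ_[p]) ^ 2 * σ := by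
  have hp2 := hp.out.two_le
  set a : ℚ_[p] := (k : ℚ_[p]) with hadef
  have ha1 : ‖a‖ = 1 := norm_unit h1 h2
  have hane : a ≠ 0 := by intro h; rw [h] at ha1; simp at ha1
  have hb1 : ‖a - (p:ℚ_[p])‖ = 1 := norm_sub_p ha1
  have hbne : a - (p:ℚ_[p]) ≠ 0 := by intro h; rw [h] at hb1; simp at hb1
  obtain ⟨b, hb, hbn⟩ := key_poly a ha1.le s
  have hcast : ((p - k : ℕ) : ℚ_[p]) = (p : ℚ_[p]) - a := by
    have : k ≤ p := by omega
    push_cast [this]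
    ring
  refine ⟨-b / (a ^ (s + 1) * (a - p) ^ s), ?_, ?_⟩
  · rw [norm_div, norm_neg, norm_mul, norm_pow, norm_pow, ha1, hb1, one_pow, one_pow, mul_one, div_one]
    exact hbn
  · rw [hcast]
    have hstep : (-1 : ℚ_[p]) ^ s / ((p:ℚ_[p]) - a) ^ s = 1 / (a - p) ^ s := by
      have : ((p:ℚ_[p]) - a) ^ s = (-1 : ℚ_[p]) ^ s * (a - p) ^ s := by
        rw [← neg_sub a ((p:ℚ_[p])), neg_pow]
      rw [this, ← div_div, div_self (pow_ne_zero s (by norm_num : (-1:ℚ_[p]) ≠ 0))]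
    rw [hstep]
    field_simp
    linear_combination (-(a^s)) * hb

lemma eps_pow {ε : ℚ} (hε : ε = 1 ∨ ε = -1) (hodd : Odd p) {k : ℕ} (hk : k ≤ p) :
    ((ε : ℚ_[p])) ^ (p - k) = (ε : ℚ_[p]) * (ε : ℚ_[p]) ^ k := by
  rcases hε with h | h
  · subst h; simp
  · subst h
    push_cast
    have h2 : ((-1 : ℚ_[p]) ^ k) * ((-1 : ℚ_[p]) ^ k) = 1 := by
      rw [← pow_add]
      exact Even.neg_one_pow ⟨k, rfl⟩
    have h3 : (-1 : ℚ_[p]) ^ (p - k) * (-1 : ℚ_[p]) ^ k = -1 := by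
      rw [← pow_add]
      have he : p - k + k = p := by omega
      rw [he]
      exact Odd.neg_one_pow hodd
    calc (-1 : ℚ_[p]) ^ (p - k)
        = (-1:ℚ_[p])^(p-k) * ((-1:ℚ_[p])^k * (-1:ℚ_[p])^k) := by rw [h2, mul_one]
    _ = ((-1:ℚ_[p])^(p-k) * (-1:ℚ_[p])^k) * (-1:ℚ_[p])^k := by ring
    _ = (-1) * (-1:ℚ_[p])^k := by rw [h3]

lemma sum_shift {S : Finset ℕ} {f g : ℕ → ℚ_[p]}
    (h : ∀ k ∈ S, ∃ ρ : ℚ_[p], f k = g k + (p : ℚ_[p]) ^ 2 * ρ ∧ ‖ρ‖ ≤ 1) :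
    ∃ R : ℚ_[p], ∑ k ∈ S, f k = ∑ k ∈ S, g k + (p : ℚ_[p]) ^ 2 * R ∧ ‖R‖ ≤ 1 := by
  classical
  choose ρ hρ hρn using h
  refine ⟨∑ k ∈ S.attach, ρ k k.2, ?_, ?_⟩
  · rw [Finset.mul_sum, ← Finset.sum_attach S f, ← Finset.sum_attach S g,
      ← Finset.sum_add_distrib]
    exact Finset.sum_congr rfl fun k _ => hρ k k.2
  · exact norm_sum_le_one fun k _ => hρn k k.2

lemma Dg_norm {δ : ℕ} : ∀ (l : List (ℕ × ℚ)), IsSignedComp l → ∀ n m : ℕ, n ≤ p - 1 → 1 ≤ m →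
    ‖((Dg δ n m l : ℚ) : ℚ_[p])‖ ≤ 1
  | [], _, n, m, _, _ => by rw [Dg]; simp
  | (s, ε) :: t, hl, n, m, hn, hm => by
      rw [Dg]
      push_cast
      refine norm_sum_le_one fun k hk => ?_
      simp only [Finset.mem_Icc] at hk
      refine norm_mul_le_one ?_
        (Dg_norm t (fun x hx => hl x (List.mem_cons_of_mem _ hx)) (k - δ) m (by omega) hm)
      rw [norm_div, norm_eps (hl (s, ε) List.mem_cons_self).2, norm_pow,
        norm_unit (by omega) (by omega), one_pow, div_one]

lemma IsSignedComp_tail {a : ℕ × ℚ} {t : List (ℕ × ℚ)} (h : IsSignedComp (a :: t)) :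
    IsSignedComp t := fun x hx => h x (List.mem_cons_of_mem _ hx)

lemma IsSignedComp_set {t : List (ℕ × ℚ)} (h : IsSignedComp t) (i : Fin t.length) :
    IsSignedComp (t.set i ((t.get i).1 + 1, (t.get i).2)) := by
  intro x hx
  rcases List.mem_or_eq_of_mem_set hx with h1 | h1
  · exact h x h1
  · subst h1
    exact ⟨Nat.succ_pos _, (h (t.get i) (List.get_mem t i)).2⟩

lemma Rhs_cons (q δ n s : ℕ) (ε : ℚ) (t : List (ℕ × ℚ)) :
    Rhs q δ n ((s, ε) :: t) = ∑ k ∈ Finset.Icc 1 n,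
      (ε ^ k / (k : ℚ) ^ s * Dg δ (k - δ) 1 t
        + (q : ℚ) * ((s : ℚ) * (ε ^ k / (k : ℚ) ^ (s + 1)) * Dg δ (k - δ) 1 t
            + ε ^ k / (k : ℚ) ^ s * ∑ i : Fin t.length,
                ((t.get i).1 : ℚ) * Dg δ (k - δ) 1 (t.set i ((t.get i).1 + 1, (t.get i).2)))) := by
  have e2 : (s : ℚ) * Dg δ n 1 ((s + 1, ε) :: t)
      = ∑ k ∈ Finset.Icc 1 n, (s : ℚ) * (ε ^ k / (k : ℚ) ^ (s + 1)) * Dg δ (k - δ) 1 t := by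
    rw [Dg, Finset.mul_sum]
    exact Finset.sum_congr rfl fun k _ => by ring
  have e3 : (∑ i : Fin t.length, ((t.get i).1 : ℚ)
          * Dg δ n 1 ((s, ε) :: t.set i ((t.get i).1 + 1, (t.get i).2)))
      = ∑ k ∈ Finset.Icc 1 n, ε ^ k / (k : ℚ) ^ s * ∑ i : Fin t.length,
          ((t.get i).1 : ℚ) * Dg δ (k - δ) 1 (t.set i ((t.get i).1 + 1, (t.get i).2)) := by
    have h1 : ∀ i : Fin t.length, ((t.get i).1 : ℚ)
          * Dg δ n 1 ((s, ε) :: t.set i ((t.get i).1 + 1, (t.get i).2))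
        = ∑ k ∈ Finset.Icc 1 n, ε ^ k / (k : ℚ) ^ s
            * (((t.get i).1 : ℚ) * Dg δ (k - δ) 1 (t.set i ((t.get i).1 + 1, (t.get i).2))) := by
      intro i
      rw [Dg, Finset.mul_sum]
      exact Finset.sum_congr rfl fun k _ => by ring
    rw [Finset.sum_congr rfl fun i _ => h1 i, Finset.sum_comm]
    exact Finset.sum_congr rfl fun k _ => by rw [Finset.mul_sum]
  have hre : Rhs q δ n ((s, ε) :: t) = Dg δ n 1 ((s, ε) :: t)
      + q * ∑ i : Fin (t.length + 1), ((((s, ε) :: t).get i).1 : ℚ)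
          * Dg δ n 1 (((s, ε) :: t).set i ((((s, ε) :: t).get i).1 + 1, (((s, ε) :: t).get i).2)) := rfl
  rw [hre, Fin.sum_univ_succ]
  simp only [List.get_cons_zero, List.get_cons_succ, Fin.val_zero, Fin.val_succ,
    List.set_cons_zero, List.set_cons_succ, List.length_cons,
    show ∀ x : Fin t.length, ((s, ε) :: t).get x.succ = t.get x from fun _ => rfl]
  rw [e2, e3, Dg, mul_add, Finset.mul_sum, Finset.mul_sum, ← Finset.sum_add_distrib,
    ← Finset.sum_add_distrib]
  exact Finset.sum_congr rfl fun k _ => by ring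

lemma main_cong (hodd : Odd p) (δ : ℕ) (hδ : δ ≤ 1) (l : List (ℕ × ℚ)) :
    IsSignedComp l → ∀ n : ℕ, n ≤ p - 1 →
      ∃ x : ℚ_[p], ((Cl l * Fg p δ n 1 l : ℚ) : ℚ_[p])
          = ((Rhs p δ n l : ℚ) : ℚ_[p]) + (p : ℚ_[p]) ^ 2 * x ∧ ‖x‖ ≤ 1 := by
  induction l with
  | nil =>
      intro _ n _
      refine ⟨0, ?_, by simp⟩
      simp [Cl, Fg, Rhs, Dg]
  | cons hd t ih =>
      obtain ⟨s, ε⟩ := hd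
      intro hl n hn
      have hse := hl (s, ε) List.mem_cons_self
      have ht : IsSignedComp t := IsSignedComp_tail hl
      have hp2 := hp.out.two_le
      have hterm : ∀ k ∈ Finset.Icc 1 n, ∃ ρ : ℚ_[p],
          ((-1 : ℚ_[p]) ^ s * (ε : ℚ_[p]) * (ε : ℚ_[p]) ^ (p - k) / ((p - k : ℕ) : ℚ_[p]) ^ s)
              * (((Cl t : ℚ) : ℚ_[p]) * ((Fg p δ (k - δ) 1 t : ℚ) : ℚ_[p]))
            = (((ε ^ k / (k : ℚ) ^ s * Dg δ (k - δ) 1 t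
                + (p : ℚ) * ((s : ℚ) * (ε ^ k / (k : ℚ) ^ (s + 1)) * Dg δ (k - δ) 1 t
                    + ε ^ k / (k : ℚ) ^ s * ∑ i : Fin t.length,
                        ((t.get i).1 : ℚ) * Dg δ (k - δ) 1 (t.set i ((t.get i).1 + 1, (t.get i).2)))) : ℚ) : ℚ_[p])
              + (p : ℚ_[p]) ^ 2 * ρ ∧ ‖ρ‖ ≤ 1 := by
        intro k hk
        simp only [Finset.mem_Icc] at hk
        obtain ⟨τ, hτ, hτn⟩ := ih ht (k - δ) (by omega)
        obtain ⟨σ, hσn, hσ⟩ := inv_expand s (by omega : 1 ≤ k) (by omega : k ≤ p - 1)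
        have heps := eps_pow (p := p) hse.2 hodd (show k ≤ p by omega)
        have hε2 : (ε : ℚ_[p]) * (ε : ℚ_[p]) = 1 := by
          rcases hse.2 with h | h <;> subst h <;> norm_num
        have hW : ((Cl t : ℚ) : ℚ_[p]) * ((Fg p δ (k - δ) 1 t : ℚ) : ℚ_[p])
            = ((Dg δ (k - δ) 1 t : ℚ) : ℚ_[p])
              + (p : ℚ_[p]) * (∑ i : Fin t.length, ((t.get i).1 : ℚ_[p])
                  * ((Dg δ (k - δ) 1 (t.set i ((t.get i).1 + 1, (t.get i).2)) : ℚ) : ℚ_[p]))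
              + (p : ℚ_[p]) ^ 2 * τ := by
          rw [Rhs] at hτ
          push_cast at hτ ⊢
          linear_combination hτ
        have hfac : (-1 : ℚ_[p]) ^ s * (ε : ℚ_[p]) * (ε : ℚ_[p]) ^ (p - k)
              / ((p - k : ℕ) : ℚ_[p]) ^ s
            = (ε : ℚ_[p]) ^ k * (1 / (k : ℚ_[p]) ^ s
                + (p : ℚ_[p]) * ((s : ℚ_[p]) / (k : ℚ_[p]) ^ (s + 1)) + (p : ℚ_[p]) ^ 2 * σ) := by
          rw [heps]
          calc (-1 : ℚ_[p]) ^ s * (ε : ℚ_[p]) * ((ε : ℚ_[p]) * (ε : ℚ_[p]) ^ k)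
                / ((p - k : ℕ) : ℚ_[p]) ^ s
              = ((ε : ℚ_[p]) * (ε : ℚ_[p])) * ((ε : ℚ_[p]) ^ k
                  * ((-1 : ℚ_[p]) ^ s / ((p - k : ℕ) : ℚ_[p]) ^ s)) := by ring
          _ = (ε : ℚ_[p]) ^ k * ((-1 : ℚ_[p]) ^ s / ((p - k : ℕ) : ℚ_[p]) ^ s) := by
              rw [hε2, one_mul]
          _ = _ := by rw [hσ]
        refine ⟨(ε : ℚ_[p]) ^ k * (((s : ℚ_[p]) / (k : ℚ_[p]) ^ (s + 1))
              * (∑ i : Fin t.length, ((t.get i).1 : ℚ_[p])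
                  * ((Dg δ (k - δ) 1 (t.set i ((t.get i).1 + 1, (t.get i).2)) : ℚ) : ℚ_[p]))
            + σ * (((Dg δ (k - δ) 1 t : ℚ) : ℚ_[p])
                + (p : ℚ_[p]) * (∑ i : Fin t.length, ((t.get i).1 : ℚ_[p])
                    * ((Dg δ (k - δ) 1 (t.set i ((t.get i).1 + 1, (t.get i).2)) : ℚ) : ℚ_[p])))
            + (1 / (k : ℚ_[p]) ^ s + (p : ℚ_[p]) * ((s : ℚ_[p]) / (k : ℚ_[p]) ^ (s + 1))
                + (p : ℚ_[p]) ^ 2 * σ) * τ), ?_, ?_⟩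
        · rw [hfac, hW]
          push_cast
          ring
        · have ha1 : ‖(k : ℚ_[p])‖ = 1 := norm_unit (by omega) (by omega)
          have hE : ‖(ε : ℚ_[p]) ^ k‖ ≤ 1 := le_of_eq (norm_eps hse.2 k)
          have hXs : ∀ m : ℕ, ‖(1 : ℚ_[p]) / (k : ℚ_[p]) ^ m‖ ≤ 1 := by
            intro m
            rw [norm_div, norm_one, norm_pow, ha1, one_pow, div_one]
          have hY : ‖(s : ℚ_[p]) / (k : ℚ_[p]) ^ (s + 1)‖ ≤ 1 := by
            rw [norm_div, norm_pow, ha1, one_pow, div_one]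
            exact norm_natCast_le s
          have hB : ‖((Dg δ (k - δ) 1 t : ℚ) : ℚ_[p])‖ ≤ 1 :=
            Dg_norm t ht (k - δ) 1 (by omega) le_rfl
          have hC : ‖(∑ i : Fin t.length, ((t.get i).1 : ℚ_[p])
              * ((Dg δ (k - δ) 1 (t.set i ((t.get i).1 + 1, (t.get i).2)) : ℚ) : ℚ_[p]))‖ ≤ 1 := by
            refine norm_sum_le_one fun i _ => norm_mul_le_one (norm_natCast_le _) ?_
            exact Dg_norm _ (IsSignedComp_set ht i) (k - δ) 1 (by omega) le_rfl
          have hpn : ‖(p : ℚ_[p])‖ ≤ 1 := norm_natCast_le p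
          have hp2n : ‖(p : ℚ_[p]) ^ 2‖ ≤ 1 := by
            rw [norm_pow]; exact pow_le_one₀ (norm_nonneg _) hpn
          refine norm_mul_le_one hE (norm_add_le_one (norm_add_le_one
            (norm_mul_le_one hY hC)
            (norm_mul_le_one hσn (norm_add_le_one hB (norm_mul_le_one hpn hC)))) ?_)
          exact norm_mul_le_one (norm_add_le_one (norm_add_le_one (hXs s)
            (norm_mul_le_one hpn hY)) (norm_mul_le_one hp2n hσn)) hτn
      obtain ⟨R, hR, hRn⟩ := sum_shift hterm
      refine ⟨R, ?_, hRn⟩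
      have lhs_eq : ((Cl ((s, ε) :: t) * Fg p δ n 1 ((s, ε) :: t) : ℚ) : ℚ_[p])
          = ∑ k ∈ Finset.Icc 1 n,
              ((-1 : ℚ_[p]) ^ s * (ε : ℚ_[p]) * (ε : ℚ_[p]) ^ (p - k) / ((p - k : ℕ) : ℚ_[p]) ^ s)
                * (((Cl t : ℚ) : ℚ_[p]) * ((Fg p δ (k - δ) 1 t : ℚ) : ℚ_[p])) := by
        rw [Cl_cons, Fg]
        push_cast
        rw [Finset.mul_sum]
        exact Finset.sum_congr rfl fun k _ => by ring
      have rhs_eq : ((Rhs p δ n ((s, ε) :: t) : ℚ) : ℚ_[p])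
          = ∑ k ∈ Finset.Icc 1 n,
              (((ε ^ k / (k : ℚ) ^ s * Dg δ (k - δ) 1 t
                + (p : ℚ) * ((s : ℚ) * (ε ^ k / (k : ℚ) ^ (s + 1)) * Dg δ (k - δ) 1 t
                    + ε ^ k / (k : ℚ) ^ s * ∑ i : Fin t.length,
                        ((t.get i).1 : ℚ) * Dg δ (k - δ) 1 (t.set i ((t.get i).1 + 1, (t.get i).2)))) : ℚ) : ℚ_[p]) := by
        rw [Rhs_cons, Rat.cast_sum]
      rw [lhs_eq, rhs_eq]
      exact hR

lemma toRatModEq {a b : ℚ}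
    (h : ∃ x : ℚ_[p], ((a : ℚ_[p])) = (b : ℚ_[p]) + (p : ℚ_[p]) ^ 2 * x ∧ ‖x‖ ≤ 1) :
    RatModEq p 2 a b := by
  obtain ⟨x, hx, hxn⟩ := h
  by_cases hab : a = b
  · exact Or.inl hab
  right
  have hq : a - b ≠ 0 := sub_ne_zero.mpr hab
  have h1 : ((a - b : ℚ) : ℚ_[p]) = (p : ℚ_[p]) ^ 2 * x := by
    push_cast
    rw [hx]
    ring
  have hppos : (1 : ℝ) < (p : ℝ) := by exact_mod_cast hp.out.one_lt
  have h2 : ‖((a - b : ℚ) : ℚ_[p])‖ ≤ ((p : ℝ)) ^ (-2 : ℤ) := by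
    rw [h1, norm_mul, norm_pow, Padic.norm_p]
    have : ((p : ℝ))⁻¹ ^ 2 * ‖x‖ ≤ ((p : ℝ))⁻¹ ^ 2 * 1 := by
      refine mul_le_mul_of_nonneg_left hxn (by positivity)
    calc ((p : ℝ))⁻¹ ^ 2 * ‖x‖ ≤ ((p : ℝ))⁻¹ ^ 2 * 1 := this
    _ = ((p : ℝ)) ^ (-2 : ℤ) := by
        rw [mul_one, inv_pow, ← zpow_natCast, ← zpow_neg]
        norm_num
  rw [Padic.eq_padicNorm, padicNorm.eq_zpow_of_nonzero hq] at h2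
  rw [Rat.cast_zpow, Rat.cast_natCast] at h2
  have h3 := (zpow_le_zpow_iff_right₀ hppos).mp h2
  omega

end Padic

end Rev



/-- Theorem `thm:reversal2`: reversal relations mod `p²`.
For an odd prime `p` and a signed composition `𝐬` of depth `d`:
`(-1)^{|𝐬|} sgn(𝐬) H_{p-1}(rev 𝐬) ≡ H_{p-1}(𝐬) + p Σᵢ sᵢ H_{p-1}(𝐬 ⊕ eᵢ) (mod p²)`,
and likewise for `H⋆`, where `𝐬 ⊕ eᵢ` increases the `i`-th exponent by one. -/
theorem reversal_mod_p_sq (p : ℕ) (hp : p.Prime) (hodd : Odd p)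
    (s : List (ℕ × ℚ)) (hs : IsSignedComp s) :
    RatModEq p 2
      ((-1 : ℚ) ^ ((s.map Prod.fst).sum) * (s.map Prod.snd).prod * AMHS (p - 1) s.reverse)
      (AMHS (p - 1) s +
        (p : ℚ) * ∑ i : Fin s.length,
          ((s.get i).1 : ℚ) * AMHS (p - 1) (s.set i ((s.get i).1 + 1, (s.get i).2))) ∧
    RatModEq p 2
      ((-1 : ℚ) ^ ((s.map Prod.fst).sum) * (s.map Prod.snd).prod * AMHSstar (p - 1) s.reverse)
      (AMHSstar (p - 1) s +
        (p : ℚ) * ∑ i : Fin s.length,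
          ((s.get i).1 : ℚ) * AMHSstar (p - 1) (s.set i ((s.get i).1 + 1, (s.get i).2))) := by
  haveI : Fact p.Prime := ⟨hp⟩
  have hp1 : 1 ≤ p := hp.one_lt.le.trans' (by norm_num)
  constructor
  · have hA : (-1 : ℚ) ^ ((s.map Prod.fst).sum) * (s.map Prod.snd).prod * AMHS (p - 1) s.reverse
        = Rev.Cl s * Rev.Fg p 1 (p - 1) 1 s := by
      rw [Rev.sign_eq, Rev.AMHS_eq, Rev.rev_chain p 1 le_rfl hp1]
    have hB : AMHS (p - 1) s + (p : ℚ) * ∑ i : Fin s.length,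
          ((s.get i).1 : ℚ) * AMHS (p - 1) (s.set i ((s.get i).1 + 1, (s.get i).2))
        = Rev.Rhs p 1 (p - 1) s := by
      rw [Rev.Rhs]
      simp only [Rev.AMHS_eq]
    rw [hA, hB]
    exact Rev.toRatModEq (Rev.main_cong hodd 1 le_rfl s hs (p - 1) le_rfl)
  · have hA : (-1 : ℚ) ^ ((s.map Prod.fst).sum) * (s.map Prod.snd).prod * AMHSstar (p - 1) s.reverse
        = Rev.Cl s * Rev.Fg p 0 (p - 1) 1 s := by
      rw [Rev.sign_eq, Rev.AMHSstar_eq, Rev.rev_chain p 0 (by norm_num) hp1]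
    have hB : AMHSstar (p - 1) s + (p : ℚ) * ∑ i : Fin s.length,
          ((s.get i).1 : ℚ) * AMHSstar (p - 1) (s.set i ((s.get i).1 + 1, (s.get i).2))
        = Rev.Rhs p 0 (p - 1) s := by
      rw [Rev.Rhs]
      simp only [Rev.AMHSstar_eq]
    rw [hA, hB]
    exact Rev.toRatModEq (Rev.main_cong hodd 0 (by norm_num) s hs (p - 1) le_rfl)
end

section
/- For every integer n ≥ 0 and every signed composition 𝐬 of depth d with reversal rev(𝐬): H^⋆_n(rev(𝐬)) = (−1)^d · Σ (−1)^r · H_n(𝐬_1)·H_n(𝐬_2)⋯H_n(𝐬_r), and H_n(rev(𝐬)) = (−1)^d · Σ (−1)^r · H^⋆_n(𝐬_1)·H^⋆_n(𝐬_2)⋯H^⋆_n(𝐬_r), where both sums range over all decompositions of 𝐬 as a concatenation 𝐬 = 𝐬_1 ⊔ 𝐬_2 ⊔ ⋯ ⊔ 𝐬_r of nonempty consecutive blocks (r = 1,…,d). -/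
open scoped BigOperators

/-- All decompositions of a list into consecutive nonempty blocks, i.e. all ways
to write `𝐬 = 𝐬₁ ⊔ 𝐬₂ ⊔ ⋯ ⊔ 𝐬ᵣ` with each `𝐬ⱼ` nonempty. -/
def blockDecomps {α : Type*} : List α → List (List (List α))
  | [] => [[]]
  | a :: s => (blockDecomps s).flatMap (fun bs =>
      match bs with
      | [] => [[[a]]]
      | b :: bs' => [[a] :: b :: bs', (a :: b) :: bs'])

/-- star sum with indices in `[L, n]`, weakly decreasing. -/
def SF (L : ℕ) : ℕ → List (ℕ × ℚ) → ℚ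
  | _, [] => 1
  | n, (s, ε) :: t => ∑ k ∈ Finset.Icc L n, ε ^ k / (k : ℚ) ^ s * SF L k t

/-- strict sum with indices in `[L, n]`, strictly decreasing. -/
def DF (L : ℕ) : ℕ → List (ℕ × ℚ) → ℚ
  | _, [] => 1
  | n, (s, ε) :: t => ∑ k ∈ Finset.Icc L n, ε ^ k / (k : ℚ) ^ s * DF L (k - 1) t

lemma SF_one (n : ℕ) (s : List (ℕ × ℚ)) : SF 1 n s = AMHSstar n s := by
  induction s generalizing n with
  | nil => rfl
  | cons p t ih =>
    obtain ⟨a, e⟩ := p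
    simp only [SF, AMHSstar, ih]

lemma DF_one (n : ℕ) (s : List (ℕ × ℚ)) : DF 1 n s = AMHS n s := by
  induction s generalizing n with
  | nil => rfl
  | cons p t ih =>
    obtain ⟨a, e⟩ := p
    simp only [DF, AMHS, ih]

lemma swap_Icc (L n : ℕ) (F : ℕ → ℕ → ℚ) :
    ∑ j ∈ Finset.Icc L n, ∑ k ∈ Finset.Icc L j, F j k
      = ∑ k ∈ Finset.Icc L n, ∑ j ∈ Finset.Icc k n, F j k := by
  refine Finset.sum_comm' ?_
  intro x y
  simp only [Finset.mem_Icc]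
  omega

lemma swap_Icc' (L n : ℕ) (hL : 1 ≤ L) (F : ℕ → ℕ → ℚ) :
    ∑ j ∈ Finset.Icc L n, ∑ k ∈ Finset.Icc L (j - 1), F j k
      = ∑ k ∈ Finset.Icc L n, ∑ j ∈ Finset.Icc (k + 1) n, F j k := by
  refine Finset.sum_comm' ?_
  intro x y
  simp only [Finset.mem_Icc]
  omega

lemma SF_append (L : ℕ) (p : ℕ × ℚ) (u : List (ℕ × ℚ)) : ∀ n,
    SF L n (u ++ [p]) = ∑ k ∈ Finset.Icc L n, p.2 ^ k / (k : ℚ) ^ p.1 * SF k n u := by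
  induction u with
  | nil =>
    intro n
    obtain ⟨a, e⟩ := p
    simp [SF]
  | cons q t ih =>
    intro n
    obtain ⟨a, e⟩ := q
    simp only [List.cons_append, SF]
    simp only [List.append_eq, ih]
    simp only [Finset.mul_sum]
    rw [swap_Icc]
    exact Finset.sum_congr rfl fun k _ => Finset.sum_congr rfl fun j _ => by ring

lemma DF_append (L : ℕ) (hL : 1 ≤ L) (p : ℕ × ℚ) (u : List (ℕ × ℚ)) : ∀ n,
    DF L n (u ++ [p]) = ∑ k ∈ Finset.Icc L n, p.2 ^ k / (k : ℚ) ^ p.1 * DF (k + 1) n u := by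
  induction u with
  | nil =>
    intro n
    obtain ⟨a, e⟩ := p
    simp [DF]
  | cons q t ih =>
    intro n
    obtain ⟨a, e⟩ := q
    simp only [List.cons_append, DF]
    simp only [List.append_eq, ih]
    simp only [Finset.mul_sum]
    rw [swap_Icc' L n hL]
    exact Finset.sum_congr rfl fun k _ => Finset.sum_congr rfl fun j _ => by ring

lemma DF_cons (L n : ℕ) (q : ℕ × ℚ) (t : List (ℕ × ℚ)) :
    DF L n (q :: t) = ∑ k ∈ Finset.Icc L n, q.2 ^ k / (k : ℚ) ^ q.1 * DF L (k - 1) t := by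
  obtain ⟨a, e⟩ := q; rfl

lemma SF_cons (L n : ℕ) (q : ℕ × ℚ) (t : List (ℕ × ℚ)) :
    SF L n (q :: t) = ∑ k ∈ Finset.Icc L n, q.2 ^ k / (k : ℚ) ^ q.1 * SF L k t := by
  obtain ⟨a, e⟩ := q; rfl

lemma Icc_split (m n : ℕ) (h : m ≤ n) (g : ℕ → ℚ) :
    ∑ k ∈ Finset.Icc 1 n, g k
      = (∑ k ∈ Finset.Icc 1 m, g k) + ∑ k ∈ Finset.Icc (m + 1) n, g k := by
  have e1 : ∀ b : ℕ, Finset.Icc 1 b = Finset.Ioc 0 b := by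
    intro b; ext x; simp only [Finset.mem_Icc, Finset.mem_Ioc]; omega
  have e2 : Finset.Icc (m + 1) n = Finset.Ioc m n := by
    ext x; simp only [Finset.mem_Icc, Finset.mem_Ioc]; omega
  rw [e1, e1, e2, ← Finset.sum_Ioc_consecutive g (Nat.zero_le m) h]

lemma G_eq : ∀ (s : List (ℕ × ℚ)) (m n : ℕ), m ≤ n →
    (∑ j ∈ Finset.range (s.length + 1),
      (-1 : ℚ) ^ j * DF 1 m (s.take j) * SF 1 n ((s.drop j).reverse))
      = SF (m + 1) n s.reverse := by
  intro s
  induction s with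
  | nil => intro m n h; simp [DF, SF]
  | cons a t ih =>
    intro m n h
    rw [List.length_cons, Finset.sum_range_succ']
    simp only [List.take_succ_cons, List.drop_succ_cons, List.take_zero, List.drop_zero,
      pow_zero, one_mul, List.reverse_cons, pow_succ, DF_cons, SF_append]
    have hDF : DF 1 m ([] : List (ℕ × ℚ)) = 1 := rfl
    rw [hDF, one_mul]
    have h1 : ∀ j ∈ Finset.range (t.length + 1),
        ((-1 : ℚ) ^ j * -1) * (∑ k ∈ Finset.Icc 1 m,
            a.2 ^ k / (k : ℚ) ^ a.1 * DF 1 (k - 1) (t.take j)) * SF 1 n ((t.drop j).reverse)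
          = ∑ k ∈ Finset.Icc 1 m, a.2 ^ k / (k : ℚ) ^ a.1 *
              (-((-1 : ℚ) ^ j * DF 1 (k - 1) (t.take j) * SF 1 n ((t.drop j).reverse))) := by
      intro j _
      rw [Finset.mul_sum, Finset.sum_mul]
      exact Finset.sum_congr rfl fun k _ => by ring
    rw [Finset.sum_congr rfl h1, Finset.sum_comm]
    have h2 : ∀ k ∈ Finset.Icc 1 m,
        (∑ j ∈ Finset.range (t.length + 1), a.2 ^ k / (k : ℚ) ^ a.1 *
            (-((-1 : ℚ) ^ j * DF 1 (k - 1) (t.take j) * SF 1 n ((t.drop j).reverse))))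
          = -(a.2 ^ k / (k : ℚ) ^ a.1 * SF k n t.reverse) := by
      intro k hk
      simp only [Finset.mem_Icc] at hk
      rw [← Finset.mul_sum, Finset.sum_neg_distrib]
      rw [ih (k - 1) n (by omega)]
      have : k - 1 + 1 = k := by omega
      rw [this]
      ring
    rw [Finset.sum_congr rfl h2, Finset.sum_neg_distrib, Icc_split m n h]
    ring

lemma G'_eq : ∀ (s : List (ℕ × ℚ)) (m n : ℕ), m ≤ n →
    (∑ j ∈ Finset.range (s.length + 1),
      (-1 : ℚ) ^ j * SF 1 m (s.take j) * DF 1 n ((s.drop j).reverse))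
      = DF (m + 1) n s.reverse := by
  intro s
  induction s with
  | nil => intro m n h; simp [DF, SF]
  | cons a t ih =>
    intro m n h
    rw [List.length_cons, Finset.sum_range_succ']
    simp only [List.take_succ_cons, List.drop_succ_cons, List.take_zero, List.drop_zero,
      pow_zero, one_mul, List.reverse_cons, pow_succ, SF_cons, DF_append 1 le_rfl,
      DF_append (m + 1) (Nat.le_add_left 1 m)]
    have hSF : SF 1 m ([] : List (ℕ × ℚ)) = 1 := rfl
    rw [hSF, one_mul]
    have h1 : ∀ j ∈ Finset.range (t.length + 1),
        ((-1 : ℚ) ^ j * -1) * (∑ k ∈ Finset.Icc 1 m,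
            a.2 ^ k / (k : ℚ) ^ a.1 * SF 1 k (t.take j)) * DF 1 n ((t.drop j).reverse)
          = ∑ k ∈ Finset.Icc 1 m, a.2 ^ k / (k : ℚ) ^ a.1 *
              (-((-1 : ℚ) ^ j * SF 1 k (t.take j) * DF 1 n ((t.drop j).reverse))) := by
      intro j _
      rw [Finset.mul_sum, Finset.sum_mul]
      exact Finset.sum_congr rfl fun k _ => by ring
    rw [Finset.sum_congr rfl h1, Finset.sum_comm]
    have h2 : ∀ k ∈ Finset.Icc 1 m,
        (∑ j ∈ Finset.range (t.length + 1), a.2 ^ k / (k : ℚ) ^ a.1 *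
            (-((-1 : ℚ) ^ j * SF 1 k (t.take j) * DF 1 n ((t.drop j).reverse))))
          = -(a.2 ^ k / (k : ℚ) ^ a.1 * DF (k + 1) n t.reverse) := by
      intro k hk
      simp only [Finset.mem_Icc] at hk
      rw [← Finset.mul_sum, Finset.sum_neg_distrib]
      rw [ih k n (by omega)]
      ring
    rw [Finset.sum_congr rfl h2, Finset.sum_neg_distrib, Icc_split m n h]
    ring

lemma key_vanish_S (n : ℕ) (u : List (ℕ × ℚ)) (hu : u ≠ []) : SF (n + 1) n u = 0 := by
  cases u with
  | nil => exact absurd rfl hu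
  | cons q t =>
    rw [SF_cons, Finset.Icc_eq_empty (by omega), Finset.sum_empty]

lemma key_vanish_D (n : ℕ) (u : List (ℕ × ℚ)) (hu : u ≠ []) : DF (n + 1) n u = 0 := by
  cases u with
  | nil => exact absurd rfl hu
  | cons q t =>
    rw [DF_cons, Finset.Icc_eq_empty (by omega), Finset.sum_empty]

def gD (v : List (ℕ × ℚ) → ℚ) (s : List (ℕ × ℚ)) : ℚ :=
  ((blockDecomps s).map (fun bs => (-1 : ℚ) ^ bs.length * (bs.map v).prod)).sum

def hterm (v : List (ℕ × ℚ) → ℚ) (p : List (ℕ × ℚ)) : List (List (ℕ × ℚ)) → ℚ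
  | [] => 0
  | b :: bs' => (-1 : ℚ) ^ (bs'.length + 1) * (v (p ++ b) * (bs'.map v).prod)

def hD (v : List (ℕ × ℚ) → ℚ) (p : List (ℕ × ℚ)) (s : List (ℕ × ℚ)) : ℚ :=
  ((blockDecomps s).map (hterm v p)).sum

lemma sum_map_flatMap {X Y : Type*} (f : X → List Y) (G : Y → ℚ) :
    ∀ l : List X, (((l.flatMap f)).map G).sum = (l.map fun x => ((f x).map G).sum).sum := by
  intro l
  induction l with
  | nil => simp
  | cons x l ih => simp [ih]

lemma list_sum_comb {X : Type*} (c : ℚ) (F G H : X → ℚ) (h : ∀ x, F x = c * G x + H x) :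
    ∀ l : List X, (l.map F).sum = c * (l.map G).sum + (l.map H).sum := by
  intro l
  induction l with
  | nil => simp
  | cons x l ih => simp only [List.map_cons, List.sum_cons, ih, h x]; ring

lemma gD_cons (v : List (ℕ × ℚ) → ℚ) (a : ℕ × ℚ) (s : List (ℕ × ℚ)) :
    gD v (a :: s) = -(v [a]) * gD v s + hD v [a] s := by
  unfold gD hD
  simp only [blockDecomps]
  rw [sum_map_flatMap]
  refine list_sum_comb _ _ _ _ ?_ (blockDecomps s)
  intro bs
  cases bs with
  | nil => simp [hterm]
  | cons b bs' => simp [hterm, pow_succ]; ring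

lemma hD_cons (v : List (ℕ × ℚ) → ℚ) (p : List (ℕ × ℚ)) (c : ℕ × ℚ) (t : List (ℕ × ℚ)) :
    hD v p (c :: t) = -(v (p ++ [c])) * gD v t + hD v (p ++ [c]) t := by
  unfold gD hD
  simp only [blockDecomps]
  rw [sum_map_flatMap]
  refine list_sum_comb _ _ _ _ ?_ (blockDecomps t)
  intro bs
  cases bs with
  | nil => simp [hterm]
  | cons b bs' =>
    simp [hterm, pow_succ, ← List.append_cons]
    ring

lemma hD_expand (v : List (ℕ × ℚ) → ℚ) :
    ∀ (s : List (ℕ × ℚ)) (p : List (ℕ × ℚ)), hD v p s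
      = ∑ j ∈ Finset.range s.length, -(v (p ++ s.take (j + 1))) * gD v (s.drop (j + 1)) := by
  intro s
  induction s with
  | nil =>
    intro p
    simp [hD, blockDecomps, hterm]
  | cons c t ih =>
    intro p
    rw [hD_cons, List.length_cons, Finset.sum_range_succ']
    simp only [List.take_succ_cons, List.drop_succ_cons, List.take_zero, List.drop_zero]
    rw [ih (p ++ [c])]
    have : ∀ j, (p ++ [c]) ++ t.take (j + 1) = p ++ (c :: t.take (j + 1)) := by
      intro j; simp
    simp only [this]
    ring

lemma gD_sum (v : List (ℕ × ℚ) → ℚ) (a : ℕ × ℚ) (s : List (ℕ × ℚ)) :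
    gD v (a :: s) = ∑ j ∈ Finset.range (s.length + 1),
      -(v ((a :: s).take (j + 1))) * gD v ((a :: s).drop (j + 1)) := by
  rw [gD_cons, hD_expand, Finset.sum_range_succ']
  simp only [List.take_succ_cons, List.drop_succ_cons, List.take_zero, List.drop_zero]
  have : ∀ j : ℕ, [a] ++ s.take (j + 1) = a :: s.take (j + 1) := by intro j; simp
  simp only [this]
  ring

lemma main1 : ∀ (N : ℕ) (s : List (ℕ × ℚ)), s.length ≤ N → ∀ n : ℕ,
    AMHSstar n s.reverse = (-1 : ℚ) ^ s.length * gD (AMHS n) s := by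
  intro N
  induction N with
  | zero =>
    intro s hs n
    have : s = [] := List.length_eq_zero_iff.mp (Nat.le_zero.mp hs)
    subst this
    simp [AMHSstar, gD, blockDecomps]
  | succ N ih =>
    intro s hs n
    cases s with
    | nil => simp [AMHSstar, gD, blockDecomps]
    | cons a t =>
      simp only [List.length_cons] at hs ⊢
      have h0 := G_eq (a :: t) n n le_rfl
      rw [key_vanish_S n _ (by simp)] at h0
      rw [List.length_cons, Finset.sum_range_succ'] at h0
      simp only [SF_one, DF_one, List.take_zero, List.drop_zero, pow_zero, one_mul] at h0
      have hnil : AMHS n [] = 1 := rfl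
      rw [hnil, one_mul] at h0
      have h1 : AMHSstar n ((a :: t).reverse)
          = -(∑ j ∈ Finset.range (t.length + 1),
              (-1 : ℚ) ^ (j + 1) * AMHS n ((a :: t).take (j + 1)) *
                AMHSstar n (((a :: t).drop (j + 1)).reverse)) := by
        linarith [h0]
      rw [h1, gD_sum, Finset.mul_sum, ← Finset.sum_neg_distrib]
      refine Finset.sum_congr rfl fun j hj => ?_
      simp only [Finset.mem_range] at hj
      have hd : AMHSstar n (((a :: t).drop (j + 1)).reverse)
          = (-1 : ℚ) ^ ((a :: t).drop (j + 1)).length * gD (AMHS n) ((a :: t).drop (j + 1)) := by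
        refine ih _ ?_ n
        simp only [List.length_drop, List.length_cons]
        omega
      rw [hd]
      have hlen : ((a :: t).drop (j + 1)).length = t.length - j := by
        simp only [List.length_drop, List.length_cons]
        omega
      rw [hlen]
      have sign : ((-1 : ℚ)) ^ (j + 1) * (-1) ^ (t.length - j) = (-1) ^ (t.length + 1) := by
        rw [← pow_add]; congr 1; omega
      linear_combination (-(AMHS n ((a :: t).take (j + 1))) *
        gD (AMHS n) ((a :: t).drop (j + 1))) * sign

lemma main2 : ∀ (N : ℕ) (s : List (ℕ × ℚ)), s.length ≤ N → ∀ n : ℕ,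
    AMHS n s.reverse = (-1 : ℚ) ^ s.length * gD (AMHSstar n) s := by
  intro N
  induction N with
  | zero =>
    intro s hs n
    have : s = [] := List.length_eq_zero_iff.mp (Nat.le_zero.mp hs)
    subst this
    simp [AMHS, gD, blockDecomps]
  | succ N ih =>
    intro s hs n
    cases s with
    | nil => simp [AMHS, gD, blockDecomps]
    | cons a t =>
      simp only [List.length_cons] at hs ⊢
      have h0 := G'_eq (a :: t) n n le_rfl
      rw [key_vanish_D n _ (by simp)] at h0
      rw [List.length_cons, Finset.sum_range_succ'] at h0
      simp only [SF_one, DF_one, List.take_zero, List.drop_zero, pow_zero, one_mul] at h0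
      have hnil : AMHSstar n [] = 1 := rfl
      rw [hnil, one_mul] at h0
      have h1 : AMHS n ((a :: t).reverse)
          = -(∑ j ∈ Finset.range (t.length + 1),
              (-1 : ℚ) ^ (j + 1) * AMHSstar n ((a :: t).take (j + 1)) *
                AMHS n (((a :: t).drop (j + 1)).reverse)) := by
        linarith [h0]
      rw [h1, gD_sum, Finset.mul_sum, ← Finset.sum_neg_distrib]
      refine Finset.sum_congr rfl fun j hj => ?_
      simp only [Finset.mem_range] at hj
      have hd : AMHS n (((a :: t).drop (j + 1)).reverse)
          = (-1 : ℚ) ^ ((a :: t).drop (j + 1)).length * gD (AMHSstar n) ((a :: t).drop (j + 1)) := by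
        refine ih _ ?_ n
        simp only [List.length_drop, List.length_cons]
        omega
      rw [hd]
      have hlen : ((a :: t).drop (j + 1)).length = t.length - j := by
        simp only [List.length_drop, List.length_cons]
        omega
      rw [hlen]
      have sign : ((-1 : ℚ)) ^ (j + 1) * (-1) ^ (t.length - j) = (-1) ^ (t.length + 1) := by
        rw [← pow_add]; congr 1; omega
      linear_combination (-(AMHSstar n ((a :: t).take (j + 1))) *
        gD (AMHSstar n) ((a :: t).drop (j + 1))) * sign

/-- equations `equ:FMZSV=concatFMZV` and `equ:FMZV=concatFMZSV`
at the level of partial sums: for a signed composition `𝐬` of depth `d`,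
`H⋆_n(rev 𝐬) = (-1)^d Σ_{𝐬₁⊔⋯⊔𝐬ᵣ=𝐬} (-1)^r H_n(𝐬₁)⋯H_n(𝐬ᵣ)` and
`H_n(rev 𝐬) = (-1)^d Σ_{𝐬₁⊔⋯⊔𝐬ᵣ=𝐬} (-1)^r H⋆_n(𝐬₁)⋯H⋆_n(𝐬ᵣ)`. -/
theorem concatenation_relation (n : ℕ) (s : List (ℕ × ℚ)) (hs : IsSignedComp s) :
    AMHSstar n s.reverse = (-1 : ℚ) ^ s.length *
      ((blockDecomps s).map
        (fun bs => (-1 : ℚ) ^ bs.length * (bs.map (AMHS n)).prod)).sum ∧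
    AMHS n s.reverse = (-1 : ℚ) ^ s.length *
      ((blockDecomps s).map
        (fun bs => (-1 : ℚ) ^ bs.length * (bs.map (AMHSstar n)).prod)).sum :=
  ⟨main1 s.length s le_rfl n, main2 s.length s le_rfl n⟩
end

section
/- Let ℓ ≥ 1 and let r_1,…,r_ℓ, t_1,…,t_ℓ be positive integers. Set 𝐬 = (r_1, {1}^{t_1−1}, r_2+1, {1}^{t_2−1}, …, r_ℓ+1, {1}^{t_ℓ−1}) and 𝐬^∨ = ({1}^{r_1−1}, t_1+1, {1}^{r_2−1}, t_2+1, …, t_{ℓ−1}+1, {1}^{r_ℓ−1}, t_ℓ), where {1}^m denotes 1 repeated m times. Then for all sufficiently large primes p: H^⋆_{p−1}(𝐬) ≡ −H^⋆_{p−1}(𝐬^∨) (mod p). -/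
open scoped BigOperators

/-- The composition `𝐬 = (r₁, {1}^{t₁-1}, r₂+1, {1}^{t₂-1}, …, r_ℓ+1, {1}^{t_ℓ-1})`. -/
def vComp (ℓ : ℕ) (r t : ℕ → ℕ) : List ℕ :=
  (List.range ℓ).flatMap
    (fun j => (if j = 0 then r 0 else r j + 1) :: List.replicate (t j - 1) 1)

/-- The v-dual `𝐬^∨ = ({1}^{r₁-1}, t₁+1, {1}^{r₂-1}, t₂+1, …, t_{ℓ-1}+1, {1}^{r_ℓ-1}, t_ℓ)`. -/
def vDual (ℓ : ℕ) (r t : ℕ → ℕ) : List ℕ :=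
  (List.range ℓ).flatMap
    (fun j => List.replicate (r j - 1) 1 ++ [if j = ℓ - 1 then t j else t j + 1])

theorem sum_Icc_choose_div (n k : ℕ) (hk : 1 ≤ k) :
    ∑ m ∈ Finset.Icc k n, (m.choose k : ℚ) / m = (n.choose k : ℚ) / k := by
  induction n with
  | zero =>
    rw [show Finset.Icc k 0 = ∅ by simp [Finset.Icc_eq_empty_iff]; omega]
    simp [Nat.choose_eq_zero_of_lt (by omega : 0 < k)]
  | succ n ih =>
    by_cases h : k ≤ n + 1
    · rw [Finset.sum_Icc_succ_top h, ih]
      obtain ⟨k, rfl⟩ : ∃ k', k = k' + 1 := ⟨k - 1, by omega⟩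
      have hq1 : ((n:ℚ) + 1) * n.choose k = ((n+1).choose (k+1) : ℚ) * ((k:ℚ)+1) := by
        exact_mod_cast congrArg (Nat.cast (R := ℚ)) (Nat.add_one_mul_choose_eq n k)
      have hq2 : ((n+1).choose (k+1) : ℚ) = (n.choose k : ℚ) + (n.choose (k+1) : ℚ) := by
        exact_mod_cast congrArg (Nat.cast (R := ℚ)) (Nat.choose_succ_succ n k)
      have hk0 : ((k:ℚ)+1) ≠ 0 := by positivity
      have hn0 : ((n:ℚ)+1) ≠ 0 := by positivity
      have key : (n.choose (k+1) : ℚ) * ((n:ℚ)+1) + ((n+1).choose (k+1) : ℚ) * ((k:ℚ)+1)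
          = ((n+1).choose (k+1) : ℚ) * ((n:ℚ)+1) := by
        linear_combination -hq1 - ((n:ℚ)+1) * hq2
      push_cast
      rw [div_add_div _ _ hk0 hn0, div_eq_div_iff (mul_ne_zero hk0 hn0) hk0]
      linear_combination ((k:ℚ)+1) * key
    · rw [show Finset.Icc k (n+1) = ∅ by simp [Finset.Icc_eq_empty_iff]; omega]
      simp [Nat.choose_eq_zero_of_lt (by omega : n + 1 < k)]

theorem alt_sum_Icc_one (m J : ℕ) (hm : 1 ≤ m) :
    ∑ k ∈ Finset.Icc 1 J, (-1:ℚ)^(k-1) * (m.choose k : ℚ)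
      = 1 - (-1:ℚ)^J * ((m-1).choose J : ℚ) := by
  induction J with
  | zero => simp
  | succ J ih =>
    rw [Finset.sum_Icc_succ_top (by omega), ih]
    obtain ⟨m, rfl⟩ : ∃ m', m = m' + 1 := ⟨m - 1, by omega⟩
    have h2 : ((m+1).choose (J+1) : ℚ) = (m.choose J : ℚ) + (m.choose (J+1) : ℚ) := by
      exact_mod_cast congrArg (Nat.cast (R := ℚ)) (Nat.choose_succ_succ m J)
    simp only [Nat.add_sub_cancel, pow_succ]
    ring_nf
    ring_nf at h2
    linear_combination ((-1:ℚ))^J * h2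

theorem alt_sum_Icc (m j : ℕ) (hj : 1 ≤ j) (hjm : j ≤ m) :
    ∑ k ∈ Finset.Icc j m, (-1:ℚ)^(k-1) * (m.choose k : ℚ)
      = (-1:ℚ)^(j-1) * ((m-1).choose (j-1) : ℚ) := by
  have hm : 1 ≤ m := le_trans hj hjm
  have hsplit : ∑ k ∈ Finset.Icc 1 (j-1), (-1:ℚ)^(k-1) * (m.choose k : ℚ)
      + ∑ k ∈ Finset.Icc j m, (-1:ℚ)^(k-1) * (m.choose k : ℚ)
      = ∑ k ∈ Finset.Icc 1 m, (-1:ℚ)^(k-1) * (m.choose k : ℚ) := by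
    rw [← Finset.Ico_add_one_right_eq_Icc 1 m, ← Finset.Ico_add_one_right_eq_Icc 1 (j-1), ← Finset.Ico_add_one_right_eq_Icc j m,
      show j-1+1 = j by omega]
    exact Finset.sum_Ico_consecutive _ (by omega) (by omega)
  have h1 := alt_sum_Icc_one m (j-1) hm
  have h2 := alt_sum_Icc_one m m hm
  have h3 : ((m-1).choose m : ℚ) = 0 := by
    rw [Nat.choose_eq_zero_of_lt (by omega)]; simp
  rw [h1, h2, h3] at hsplit
  linarith [hsplit]

theorem sum_Icc_swap (m : ℕ) (F : ℕ → ℕ → ℚ) :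
    ∑ k ∈ Finset.Icc 1 m, ∑ j ∈ Finset.Icc 1 k, F k j
      = ∑ j ∈ Finset.Icc 1 m, ∑ k ∈ Finset.Icc j m, F k j := by
  have h1 : ∀ k ∈ Finset.Icc 1 m, ∑ j ∈ Finset.Icc 1 k, F k j
      = ∑ j ∈ Finset.Icc 1 m, if j ≤ k then F k j else 0 := by
    intro k hk
    rw [Finset.mem_Icc] at hk
    rw [Finset.sum_ite, Finset.sum_const_zero, add_zero]
    apply Finset.sum_congr _ (fun _ _ => rfl)
    ext j
    simp only [Finset.mem_filter, Finset.mem_Icc]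
    omega
  rw [Finset.sum_congr rfl h1, Finset.sum_comm]
  apply Finset.sum_congr rfl
  intro j hj
  rw [Finset.mem_Icc] at hj
  rw [Finset.sum_ite, Finset.sum_const_zero, add_zero]
  apply Finset.sum_congr _ (fun _ _ => rfl)
  ext k
  simp only [Finset.mem_filter, Finset.mem_Icc]
  omega


noncomputable def Zb (n a : ℕ) (B : List ℕ) : ℚ :=
  ∑ k ∈ Finset.Icc 1 n, (-1:ℚ)^(k-1) * (n.choose k : ℚ) / (k:ℚ)^a * AMHSstar k (posComp B)

def Dualc : ℕ → ℕ → List ℕ → List ℕ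
  | e, a+1, B => e :: Dualc 1 a B
  | e, 0, [] => [e]
  | e, 0, b::C => Dualc (e+1) (b-1) C
termination_by e a B => a + 2 * (B.sum + B.length)
decreasing_by
  · omega
  · simp only [List.sum_cons, List.length_cons]; omega

theorem AMHSstar_cons (n : ℕ) (b : ℕ) (C : List ℕ) :
    AMHSstar n (posComp (b :: C))
      = ∑ k ∈ Finset.Icc 1 n, (1:ℚ) / (k:ℚ)^b * AMHSstar k (posComp C) := by
  simp [posComp, AMHSstar, one_pow]

theorem Zb_succ (m a : ℕ) (B : List ℕ) :
    Zb m (a+1) B = ∑ u ∈ Finset.Icc 1 m, (1/(u:ℚ)) * Zb u a B := by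
  have h1 : ∀ u ∈ Finset.Icc 1 m, (1/(u:ℚ)) * Zb u a B
      = ∑ k ∈ Finset.Icc 1 u, (1/(u:ℚ)) * ((-1:ℚ)^(k-1) * (u.choose k : ℚ) / (k:ℚ)^a
          * AMHSstar k (posComp B)) := by
    intro u _
    rw [Zb, Finset.mul_sum]
  rw [Finset.sum_congr rfl h1, sum_Icc_swap m
    (fun u k => (1/(u:ℚ)) * ((-1:ℚ)^(k-1) * (u.choose k : ℚ) / (k:ℚ)^a
          * AMHSstar k (posComp B)))]
  rw [Zb]
  apply Finset.sum_congr rfl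
  intro k hk
  rw [Finset.mem_Icc] at hk
  have h2 : ∀ u ∈ Finset.Icc k m, (1/(u:ℚ)) * ((-1:ℚ)^(k-1) * (u.choose k : ℚ) / (k:ℚ)^a
          * AMHSstar k (posComp B))
      = ((-1:ℚ)^(k-1) / (k:ℚ)^a * AMHSstar k (posComp B)) * ((u.choose k : ℚ) / u) := by
    intro u _; ring
  rw [Finset.sum_congr rfl h2, ← Finset.mul_sum, sum_Icc_choose_div m k hk.1]
  rw [pow_succ]
  ring

theorem Zb_zero_nil (m : ℕ) (hm : 1 ≤ m) : Zb m 0 [] = 1 := by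
  have h := alt_sum_Icc_one m m hm
  rw [Nat.choose_eq_zero_of_lt (by omega), Nat.cast_zero, mul_zero, sub_zero] at h
  have h2 : Zb m 0 [] = ∑ k ∈ Finset.Icc 1 m, (-1:ℚ)^(k-1) * (m.choose k : ℚ) := by
    rw [Zb]
    apply Finset.sum_congr rfl
    intro k _
    simp only [AMHSstar, posComp, List.map_nil, mul_one, pow_zero, div_one]
  rw [h2, h]

theorem Zb_zero_cons (m b : ℕ) (hm : 1 ≤ m) (hb : 1 ≤ b) (C : List ℕ) :
    Zb m 0 (b::C) = (1/(m:ℚ)) * Zb m (b-1) C := by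
  have h1 : ∀ k ∈ Finset.Icc 1 m, (-1:ℚ)^(k-1) * (m.choose k : ℚ) / (k:ℚ)^0
        * AMHSstar k (posComp (b::C))
      = ∑ j ∈ Finset.Icc 1 k, ((-1:ℚ)^(k-1) * (m.choose k : ℚ))
          * ((1:ℚ) / (j:ℚ)^b * AMHSstar j (posComp C)) := by
    intro k _
    rw [AMHSstar_cons, Finset.mul_sum]
    simp
  rw [Zb, Finset.sum_congr rfl h1, sum_Icc_swap m
    (fun k j => ((-1:ℚ)^(k-1) * (m.choose k : ℚ))
          * ((1:ℚ) / (j:ℚ)^b * AMHSstar j (posComp C)))]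
  rw [Zb, Finset.mul_sum]
  apply Finset.sum_congr rfl
  intro j hj
  rw [Finset.mem_Icc] at hj
  rw [← Finset.sum_mul, alt_sum_Icc m j hj.1 hj.2]
  -- now: (-1)^(j-1) * C(m-1,j-1) * (1/j^b * H) = 1/m * ((-1)^(j-1)*C(m,j)/j^(b-1) * H)
  have hkey : (m:ℚ) * ((m-1).choose (j-1) : ℚ) = (m.choose j : ℚ) * (j:ℚ) := by
    obtain ⟨m', rfl⟩ : ∃ m', m = m' + 1 := ⟨m - 1, by omega⟩
    obtain ⟨j', rfl⟩ : ∃ j', j = j' + 1 := ⟨j - 1, by omega⟩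
    simp only [Nat.add_sub_cancel]
    exact_mod_cast congrArg (Nat.cast (R := ℚ)) (Nat.add_one_mul_choose_eq m' j')
  have hj0 : ((j:ℚ)) ≠ 0 := by
    have : 0 < j := hj.1; positivity
  have hm0 : ((m:ℚ)) ≠ 0 := by positivity
  have hpow : ((j:ℚ))^b = (j:ℚ)^(b-1) * (j:ℚ) := by
    rw [← pow_succ]; congr 1; omega
  rw [hpow]
  have hx0 : ((j:ℚ))^(b-1) ≠ 0 := pow_ne_zero _ hj0
  field_simp
  linear_combination AMHSstar j (posComp C) * hkey

theorem main_aux : ∀ N a (B : List ℕ), a + 2*(B.sum + B.length) ≤ N →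
    (∀ x ∈ B, 1 ≤ x) → ∀ (e n : ℕ),
    ∑ m ∈ Finset.Icc 1 n, (1/(m:ℚ)^e) * Zb m a B
      = AMHSstar n (posComp (Dualc e a B)) := by
  intro N
  induction N with
  | zero =>
    intro a B hle hpos e n
    have ha : a = 0 := by omega
    have hB : B = [] := by
      cases B with
      | nil => rfl
      | cons b C => simp only [List.sum_cons, List.length_cons] at hle; omega
    subst ha; subst hB
    rw [show Dualc e 0 [] = [e] by simp [Dualc], AMHSstar_cons]
    apply Finset.sum_congr rfl
    intro m hm
    rw [Finset.mem_Icc] at hm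
    rw [Zb_zero_nil m hm.1]
    simp [AMHSstar, posComp]
  | succ N ih =>
    intro a B hle hpos e n
    match a, B with
    | a+1, B =>
      rw [show Dualc e (a+1) B = e :: Dualc 1 a B by simp [Dualc], AMHSstar_cons]
      apply Finset.sum_congr rfl
      intro m hm
      have h1 : Zb m (a+1) B = AMHSstar m (posComp (Dualc 1 a B)) := by
        rw [Zb_succ, ← ih a B (by omega) hpos 1 m]
        apply Finset.sum_congr rfl
        intro u hu
        rw [Finset.mem_Icc] at hu
        rw [pow_one]
      rw [h1]
    | 0, [] =>
      rw [show Dualc e 0 [] = [e] by simp [Dualc], AMHSstar_cons]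
      apply Finset.sum_congr rfl
      intro m hm
      rw [Finset.mem_Icc] at hm
      rw [Zb_zero_nil m hm.1]
      simp [AMHSstar, posComp]
    | 0, b::C =>
      have hb : 1 ≤ b := hpos b List.mem_cons_self
      have hposC : ∀ x ∈ C, 1 ≤ x := fun x hx => hpos x (List.mem_cons_of_mem _ hx)
      rw [show Dualc e 0 (b::C) = Dualc (e+1) (b-1) C by simp [Dualc],
        ← ih (b-1) C (by simp [List.sum_cons] at hle; omega) hposC (e+1) n]
      apply Finset.sum_congr rfl
      intro m hm
      rw [Finset.mem_Icc] at hm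
      rw [Zb_zero_cons m b hm.1 hb C, pow_succ]
      have hm0 : ((m:ℚ)) ≠ 0 := Nat.cast_ne_zero.mpr (by omega)
      field_simp



def mkComp : List (ℕ × ℕ) → List ℕ
  | [] => []
  | (a, b) :: R => (a+1) :: (List.replicate (b-1) 1 ++ mkComp R)

def mkDual : ℕ → List (ℕ × ℕ) → List ℕ
  | t, [] => [t]
  | t, (a, b) :: R => (t+1) :: (List.replicate (a-1) 1 ++ mkDual b R)

theorem Dualc_replicate (m : ℕ) : ∀ (e : ℕ) (L : List ℕ),
    Dualc e 0 (List.replicate m 1 ++ L) = Dualc (e + m) 0 L := by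
  induction m with
  | zero => intro e L; simp
  | succ m ih =>
    intro e L
    rw [show List.replicate (m+1) 1 = 1 :: List.replicate m 1 from rfl]
    rw [List.cons_append, show Dualc e 0 (1 :: (List.replicate m 1 ++ L))
      = Dualc (e+1) 0 (List.replicate m 1 ++ L) by simp [Dualc], ih]
    congr 1
    omega

theorem Dualc_one (a : ℕ) (B : List ℕ) :
    Dualc 1 a B = List.replicate a 1 ++ Dualc 1 0 B := by
  induction a with
  | zero => simp
  | succ a ih =>
    rw [show Dualc 1 (a+1) B = 1 :: Dualc 1 a B by simp [Dualc], ih]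
    rfl

theorem Dualc_mkComp : ∀ (P : List (ℕ × ℕ)), (∀ x ∈ P, 1 ≤ x.1 ∧ 1 ≤ x.2) →
    ∀ tv : ℕ, Dualc tv 0 (mkComp P) = mkDual tv P := by
  intro P
  induction P with
  | nil => intro _ tv; simp [mkComp, mkDual, Dualc]
  | cons x R ih =>
    intro hpos tv
    obtain ⟨a, b⟩ := x
    have ha : 1 ≤ a := (hpos (a,b) List.mem_cons_self).1
    have hb : 1 ≤ b := (hpos (a,b) List.mem_cons_self).2
    rw [show mkComp ((a,b)::R) = (a+1) :: (List.replicate (b-1) 1 ++ mkComp R) from rfl]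
    rw [show Dualc tv 0 ((a+1) :: (List.replicate (b-1) 1 ++ mkComp R))
      = Dualc (tv+1) a (List.replicate (b-1) 1 ++ mkComp R) by simp [Dualc]]
    obtain ⟨a', rfl⟩ : ∃ a', a = a' + 1 := ⟨a - 1, by omega⟩
    rw [show Dualc (tv+1) (a'+1) (List.replicate (b-1) 1 ++ mkComp R)
      = (tv+1) :: Dualc 1 a' (List.replicate (b-1) 1 ++ mkComp R) by simp [Dualc]]
    rw [Dualc_one, Dualc_replicate, show 1 + (b-1) = b by omega,
      ih (fun x hx => hpos x (List.mem_cons_of_mem _ hx)) b]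
    simp [mkDual]

theorem flatMap_comp_eq : ∀ (m : ℕ) (r t : ℕ → ℕ),
    (List.range m).flatMap (fun j => (r j + 1) :: List.replicate (t j - 1) 1)
      = mkComp ((List.range m).map fun j => (r j, t j)) := by
  intro m
  induction m with
  | zero => intro r t; simp [mkComp]
  | succ m ih =>
    intro r t
    rw [List.range_succ_eq_map]
    rw [List.flatMap_cons, List.map_cons, List.flatMap_map, List.map_map]
    rw [show ((List.range m).flatMap fun j =>
        (fun j => (r j + 1) :: List.replicate (t j - 1) 1) (j + 1))
      = (List.range m).flatMap (fun j => (r (j+1) + 1) :: List.replicate (t (j+1) - 1) 1)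
      from rfl]
    rw [ih (fun j => r (j+1)) (fun j => t (j+1))]
    simp [mkComp, Function.comp_def]

theorem vComp_eq (m : ℕ) (r t : ℕ → ℕ) :
    vComp (m+1) r t = r 0 :: (List.replicate (t 0 - 1) 1
      ++ mkComp ((List.range m).map fun j => (r (j+1), t (j+1)))) := by
  rw [vComp, List.range_succ_eq_map, List.flatMap_cons, List.flatMap_map]
  rw [show ((List.range m).flatMap fun j =>
      (fun j => (if j = 0 then r 0 else r j + 1) :: List.replicate (t j - 1) 1) (j + 1))
    = (List.range m).flatMap (fun j => (r (j+1) + 1) :: List.replicate (t (j+1) - 1) 1) by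
      apply List.flatMap_congr
      intro x _
      rfl]
  rw [flatMap_comp_eq]
  simp

theorem vDual_eq : ∀ (m : ℕ) (r t : ℕ → ℕ),
    vDual (m+1) r t = List.replicate (r 0 - 1) 1
      ++ mkDual (t 0) ((List.range m).map fun j => (r (j+1), t (j+1))) := by
  intro m
  induction m with
  | zero =>
    intro r t
    simp [vDual, mkDual, List.range_succ]
  | succ m ih =>
    intro r t
    rw [vDual, List.range_succ_eq_map, List.flatMap_cons, List.flatMap_map]
    have h1 : ((List.range (m+1)).flatMap fun j =>
        (fun j => List.replicate (r j - 1) 1 ++ [if j = m + 2 - 1 then t j else t j + 1]) (j+1))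
        = vDual (m+1) (fun j => r (j+1)) (fun j => t (j+1)) := by
      rw [vDual]
      apply List.flatMap_congr
      intro x _
      show List.replicate (r (x+1) - 1) 1 ++ [if x + 1 = m + 2 - 1 then t (x+1) else t (x+1) + 1]
        = _
      have hcond : (x + 1 = m + 2 - 1) = (x = m + 1 - 1) := by
        simp only [eq_iff_iff]; omega
      simp only [hcond]
    rw [h1, ih]
    have h2 : ¬ ((0:ℕ) = m + 1 + 1 - 1) := by omega
    simp only [List.range_succ_eq_map, List.map_cons, List.map_map, mkDual,
      Function.comp_def, Nat.succ_eq_add_one, List.append_assoc, List.cons_append,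
      List.singleton_append, List.nil_append, if_neg h2]

section Valuation
variable {p : ℕ} [hfp : Fact p.Prime]

def Pge (p : ℕ) (c : ℤ) (x : ℚ) : Prop := x = 0 ∨ c ≤ padicValRat p x

theorem Pge_add {c : ℤ} {x y : ℚ} (hx : Pge p c x) (hy : Pge p c y) : Pge p c (x + y) := by
  rcases hx with rfl | hx
  · simpa using hy
  rcases hy with rfl | hy
  · rw [add_zero]; exact Or.inr hx
  by_cases h : x + y = 0
  · exact Or.inl h
  · exact Or.inr (le_trans (le_min hx hy) (padicValRat.min_le_padicValRat_add h))

theorem Pge_sum {c : ℤ} {s : Finset ℕ} {f : ℕ → ℚ} (h : ∀ i ∈ s, Pge p c (f i)) :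
    Pge p c (∑ i ∈ s, f i) := by
  classical
  induction s using Finset.induction_on with
  | empty => exact Or.inl (by simp)
  | insert a s hni ih =>
    rw [Finset.sum_insert hni]
    exact Pge_add (h _ (Finset.mem_insert_self _ _))
      (ih fun i hi => h i (Finset.mem_insert_of_mem hi))

theorem Pge_mul {c d : ℤ} {x y : ℚ} (hx : Pge p c x) (hy : Pge p d y) :
    Pge p (c + d) (x * y) := by
  rcases hx with rfl | hx
  · exact Or.inl (by simp)
  rcases hy with rfl | hy
  · exact Or.inl (by simp)
  by_cases h0x : x = 0
  · exact Or.inl (by simp [h0x])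
  by_cases h0y : y = 0
  · exact Or.inl (by simp [h0y])
  exact Or.inr (by rw [padicValRat.mul h0x h0y]; exact add_le_add hx hy)

theorem padicValRat_natCast_zero {k : ℕ} (hk : 0 < k) (hkp : k < p) :
    padicValRat p (k : ℚ) = 0 := by
  rw [padicValRat.of_nat, padicValNat.eq_zero_of_not_dvd (Nat.not_dvd_of_pos_of_lt hk hkp)]
  simp

theorem Pge_inv_pow {k s : ℕ} (hk : 0 < k) (hkp : k < p) :
    Pge p 0 ((1:ℚ) / (k:ℚ)^s) := by
  have hk0 : ((k:ℚ)) ≠ 0 := Nat.cast_ne_zero.mpr (by omega)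
  refine Or.inr ?_
  rw [one_div, padicValRat.inv, padicValRat.pow _, padicValRat_natCast_zero hk hkp]
  simp

theorem Pge_AMHSstar (L : List ℕ) : ∀ k < p, Pge p 0 (AMHSstar k (posComp L)) := by
  induction L with
  | nil =>
    intro k _
    exact Or.inr (by simp [AMHSstar, posComp, padicValRat.one])
  | cons b C ih =>
    intro k hk
    rw [AMHSstar_cons]
    apply Pge_sum
    intro j hj
    rw [Finset.mem_Icc] at hj
    have := Pge_mul (Pge_inv_pow (p := p) (s := b) (by omega : 0 < j) (by omega : j < p))
      (ih j (by omega))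
    simpa using this

theorem choose_zmod (hp : p.Prime) : ∀ k, k ≤ p - 1 → (((p-1).choose k : ℕ) : ZMod p) = (-1)^k := by
  intro k
  induction k with
  | zero => intro _; simp
  | succ k ih =>
    intro hk1
    have hk : k ≤ p - 1 := by omega
    have hp1 : p - 1 + 1 = p := by have := hp.two_le; omega
    have hpas : (p-1+1).choose (k+1) = (p-1).choose k + (p-1).choose (k+1) :=
      Nat.choose_succ_succ _ _
    have hdvd : p ∣ p.choose (k+1) :=
      Nat.Prime.dvd_choose_self hp (by omega) (by have := hp.two_le; omega)
    have h0 : ((p.choose (k+1) : ℕ) : ZMod p) = 0 :=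
      (ZMod.natCast_eq_zero_iff _ _).mpr hdvd
    rw [hp1] at hpas
    have : ((p.choose (k+1) : ℕ) : ZMod p)
        = ((p-1).choose k : ZMod p) + ((p-1).choose (k+1) : ZMod p) := by
      rw [hpas]; push_cast; ring
    rw [h0, ih hk] at this
    have := this.symm
    rw [pow_succ]
    linear_combination this

theorem Pge_coeff (hp : p.Prime) (k : ℕ) (hk : k ≤ p - 1) :
    Pge p 1 ((((1 : ℤ) - (-1)^k * ((p-1).choose k : ℤ)) : ℤ) : ℚ) := by
  set z : ℤ := (1 : ℤ) - (-1)^k * ((p-1).choose k : ℤ) with hz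
  have hdvd : (p : ℤ) ∣ z := by
    rw [← ZMod.intCast_zmod_eq_zero_iff_dvd, hz]
    push_cast
    rw [choose_zmod hp k hk]
    rw [← mul_pow]
    simp
  by_cases h0 : z = 0
  · exact Or.inl (by exact_mod_cast h0)
  refine Or.inr ?_
  rw [padicValRat.of_int]
  have : 1 ≤ padicValInt p z := by
    rw [padicValInt]
    refine one_le_padicValNat_of_dvd (Int.natAbs_ne_zero.mpr h0) ?_
    exact Int.natCast_dvd_natCast.mp (Int.dvd_natAbs.mpr hdvd)
  exact_mod_cast this
end Valuation

theorem mkComp_pos : ∀ (P : List (ℕ × ℕ)) (x : ℕ), x ∈ mkComp P → 1 ≤ x := by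
  intro P
  induction P with
  | nil => intro x hx; simp [mkComp] at hx
  | cons y R ih =>
    intro x hx
    obtain ⟨a, b⟩ := y
    rw [show mkComp ((a,b)::R) = (a+1) :: (List.replicate (b-1) 1 ++ mkComp R) from rfl] at hx
    rcases List.mem_cons.mp hx with rfl | hx
    · omega
    rcases List.mem_append.mp hx with hx | hx
    · rw [List.eq_of_mem_replicate hx]
    · exact ih x hx

theorem exact_duality (m : ℕ) (r t : ℕ → ℕ) (hr0 : 0 < r 0) (ht0 : 0 < t 0)
    (hP : ∀ x ∈ (List.range m).map (fun j => (r (j+1), t (j+1))), 1 ≤ x.1 ∧ 1 ≤ x.2) (n : ℕ) :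
    AMHSstar n (posComp (vDual (m+1) r t))
      = Zb n (r 0) (List.replicate (t 0 - 1) 1
          ++ mkComp ((List.range m).map fun j => (r (j+1), t (j+1)))) := by
  set P : List (ℕ × ℕ) := (List.range m).map (fun j => (r (j+1), t (j+1))) with hPdef
  set B : List ℕ := List.replicate (t 0 - 1) 1 ++ mkComp P with hBdef
  have hBpos : ∀ x ∈ B, 1 ≤ x := by
    intro x hx
    rcases List.mem_append.mp hx with hx | hx
    · rw [List.eq_of_mem_replicate hx]
    · exact mkComp_pos P x hx
  have hD : Dualc 1 (r 0 - 1) B = vDual (m+1) r t := by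
    rw [hBdef, Dualc_one, Dualc_replicate, show 1 + (t 0 - 1) = t 0 by omega,
      Dualc_mkComp P hP (t 0), vDual_eq]
  rw [← hD, ← main_aux ((r 0 - 1) + 2*(B.sum + B.length)) (r 0 - 1) B le_rfl hBpos 1 n]
  have hzs := Zb_succ n (r 0 - 1) B
  rw [show r 0 - 1 + 1 = r 0 by omega] at hzs
  rw [hzs]
  apply Finset.sum_congr rfl
  intro u _
  rw [pow_one]


/-- Theorem `thm:dualFMZVsuperb=1`, duality of FMZVs:
for all sufficiently large primes `p`, `H⋆_{p-1}(𝐬) ≡ -H⋆_{p-1}(𝐬^∨) (mod p)`. -/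
theorem v_duality_mod_p (ℓ : ℕ) (hℓ : 0 < ℓ) (r t : ℕ → ℕ)
    (hr : ∀ i < ℓ, 0 < r i) (ht : ∀ i < ℓ, 0 < t i) :
    ∃ N, ∀ p ≥ N, Nat.Prime p →
      RatModEq p 1 (AMHSstar (p - 1) (posComp (vComp ℓ r t)))
        (-(AMHSstar (p - 1) (posComp (vDual ℓ r t)))) := by
  obtain ⟨m, rfl⟩ : ∃ m, ℓ = m + 1 := ⟨ℓ - 1, by omega⟩
  refine ⟨2, fun p hp hprime => ?_⟩
  haveI : Fact p.Prime := ⟨hprime⟩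
  have hp2 : 2 ≤ p := hprime.two_le
  set n : ℕ := p - 1 with hn
  set P : List (ℕ × ℕ) := (List.range m).map (fun j => (r (j+1), t (j+1))) with hPdef
  set B : List ℕ := List.replicate (t 0 - 1) 1 ++ mkComp P with hBdef
  have hPpos : ∀ x ∈ P, 1 ≤ x.1 ∧ 1 ≤ x.2 := by
    intro x hx
    rw [hPdef, List.mem_map] at hx
    obtain ⟨j, hj, rfl⟩ := hx
    rw [List.mem_range] at hj
    exact ⟨hr (j+1) (by omega), ht (j+1) (by omega)⟩
  have hb : AMHSstar n (posComp (vDual (m+1) r t)) = Zb n (r 0) B :=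
    exact_duality m r t (hr 0 (by omega)) (ht 0 (by omega)) hPpos n
  have ha : AMHSstar n (posComp (vComp (m+1) r t))
      = ∑ k ∈ Finset.Icc 1 n, (1:ℚ)/(k:ℚ)^(r 0) * AMHSstar k (posComp B) := by
    rw [vComp_eq, AMHSstar_cons]
  have hsum : AMHSstar n (posComp (vComp (m+1) r t)) + AMHSstar n (posComp (vDual (m+1) r t))
      = ∑ k ∈ Finset.Icc 1 n, ((((1 : ℤ) - (-1)^k * (((p-1).choose k : ℕ) : ℤ)) : ℤ) : ℚ)
          * ((1:ℚ)/(k:ℚ)^(r 0) * AMHSstar k (posComp B)) := by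
    rw [ha, hb, Zb, ← Finset.sum_add_distrib]
    apply Finset.sum_congr rfl
    intro k hk
    rw [Finset.mem_Icc] at hk
    have hne : ((-1:ℚ))^(k-1) = -((-1:ℚ))^k := by
      obtain ⟨k', rfl⟩ : ∃ k', k = k' + 1 := ⟨k - 1, by omega⟩
      simp [pow_succ]
    rw [← hn, hne]
    push_cast
    ring
  have hval : Pge p 1 (∑ k ∈ Finset.Icc 1 n,
      ((((1 : ℤ) - (-1)^k * (((p-1).choose k : ℕ) : ℤ)) : ℤ) : ℚ)
        * ((1:ℚ)/(k:ℚ)^(r 0) * AMHSstar k (posComp B))) := by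
    apply Pge_sum
    intro k hk
    rw [Finset.mem_Icc] at hk
    have hkp : k < p := by omega
    have h1 := Pge_coeff hprime k (by omega)
    have h2 := Pge_mul (Pge_inv_pow (p := p) (s := r 0) (by omega : 0 < k) hkp)
      (Pge_AMHSstar B k hkp)
    have h3 := Pge_mul h1 h2
    simpa using h3
  rw [← hsum] at hval
  rcases hval with h0 | h1
  · exact Or.inl (by linarith [h0])
  · refine Or.inr ?_
    rw [sub_neg_eq_add]
    exact_mod_cast h1
end
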